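/- arXiv:math/0605119 — 5 statements merged into one kernel-verified Lean document; each statement's English description precedes it below -/
import Mathlib

section
/- Every monomial ideal I in the polynomial ring S = K[x,y] in two variables over a field K is pretty clean. -/
open MvPolynomial

/-- The monomial `x^a` in `K[x_i : i ∈ σ]`. -/
noncomputable def mono (K : Type*) [Field K] {σ : Type*} (a : σ →₀ ℕ) :
    MvPolynomial σ K :=
  MvPolynomial.monomial a 1

/-- An ideal is a monomial ideal if it is generated by monomials. -/
def IsMonomialIdeal {K : Type*} [Field K] {σ : Type*}
    (I : Ideal (MvPolynomial σ K)) : Prop :=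
  ∃ A : Set (σ →₀ ℕ), I = Ideal.span ((fun a => mono K a) '' A)

/-- `IsPrimeFiltration I c u` says that `c` is a chain of (monomial) ideals
`I = I₀ ⊆ I₁ ⊆ ⋯ ⊆ I_r = S` with `I_j = I_{j-1} + (x^{u j})` and
`I_{j-1} : x^{u j}` a prime ideal, i.e. `I_j/I_{j-1} ≅ S/P_j`. -/
def IsPrimeFiltration {K : Type*} [Field K] {σ : Type*}
    (I : Ideal (MvPolynomial σ K)) {r : ℕ}
    (c : Fin (r + 1) → Ideal (MvPolynomial σ K)) (u : Fin r → (σ →₀ ℕ)) : Prop :=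
  c 0 = I ∧ c (Fin.last r) = ⊤ ∧
    (∀ j : Fin r, c j.succ = c j.castSucc ⊔ Ideal.span {mono K (u j)}) ∧
    (∀ j : Fin r, ((c j.castSucc).colon (Ideal.span {mono K (u j)})).IsPrime)

/-- The `j`-th prime factor `P_j = I_{j-1} : u_j` of a prime filtration. -/
noncomputable def filtFactor {K : Type*} [Field K] {σ : Type*} {r : ℕ}
    (c : Fin (r + 1) → Ideal (MvPolynomial σ K)) (u : Fin r → (σ →₀ ℕ)) (j : Fin r) :
    Ideal (MvPolynomial σ K) :=
  (c j.castSucc).colon (Ideal.span {mono K (u j)})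

/-- A prime filtration is pretty clean if `i < j` and `P_i ⊆ P_j` imply `P_i = P_j`. -/
def IsPrettyCleanFiltration {K : Type*} [Field K] {σ : Type*}
    (I : Ideal (MvPolynomial σ K)) {r : ℕ}
    (c : Fin (r + 1) → Ideal (MvPolynomial σ K)) (u : Fin r → (σ →₀ ℕ)) : Prop :=
  IsPrimeFiltration I c u ∧
    ∀ i j : Fin r, i < j → filtFactor c u i ≤ filtFactor c u j →
      filtFactor c u i = filtFactor c u j

/-- A monomial ideal is pretty clean if it admits a pretty clean filtration. -/
def IsPrettyClean {K : Type*} [Field K] {σ : Type*}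
    (I : Ideal (MvPolynomial σ K)) : Prop :=
  ∃ (r : ℕ) (c : Fin (r + 1) → Ideal (MvPolynomial σ K)) (u : Fin r → (σ →₀ ℕ)),
    IsPrettyCleanFiltration I c u

/-- A prime filtration is clean if its support is the set of minimal primes of `I`. -/
def IsCleanFiltration {K : Type*} [Field K] {σ : Type*}
    (I : Ideal (MvPolynomial σ K)) {r : ℕ}
    (c : Fin (r + 1) → Ideal (MvPolynomial σ K)) (u : Fin r → (σ →₀ ℕ)) : Prop :=
  IsPrimeFiltration I c u ∧
    {P | ∃ j : Fin r, filtFactor c u j = P} = I.minimalPrimes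

/-- A monomial ideal is clean if it admits a clean filtration. -/
def IsClean {K : Type*} [Field K] {σ : Type*}
    (I : Ideal (MvPolynomial σ K)) : Prop :=
  ∃ (r : ℕ) (c : Fin (r + 1) → Ideal (MvPolynomial σ K)) (u : Fin r → (σ →₀ ℕ)),
    IsCleanFiltration I c u


section Aux

variable (K : Type*) [Field K]

abbrev Pt := Fin 2 →₀ ℕ

noncomputable def JS (U : Set Pt) : Ideal (MvPolynomial (Fin 2) K) :=
  Ideal.span ((fun a => mono K a) '' U)

variable {K}

lemma mem_JS {U : Set Pt} {p : MvPolynomial (Fin 2) K} :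
    p ∈ JS K U ↔ ∀ a ∈ p.support, ∃ b ∈ U, b ≤ a := by
  simpa [JS, mono] using (mem_ideal_span_monomial_image (x := p) (s := U))

lemma mono_mem_JS {U : Set Pt} {a : Pt} :
    mono K a ∈ JS K U ↔ ∃ b ∈ U, b ≤ a := by
  rw [mem_JS]
  constructor
  · intro h; exact h a (by simp [mono, support_monomial])
  · intro h c hc
    have : a = c := by simpa [mono, support_monomial] using hc
    exact this ▸ h

def UpSet (U : Set Pt) : Prop := ∀ ⦃a⦄, a ∈ U → ∀ ⦃b⦄, a ≤ b → b ∈ U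

lemma mem_JS_of_upSet {U : Set Pt} (hU : UpSet U) {p : MvPolynomial (Fin 2) K} :
    p ∈ JS K U ↔ ∀ a ∈ p.support, a ∈ U := by
  rw [mem_JS]
  exact forall₂_congr fun a _ => ⟨fun ⟨b, hb, hba⟩ => hU hb hba, fun h => ⟨a, h, le_rfl⟩⟩

lemma JS_union (U V : Set Pt) : JS K (U ∪ V) = JS K U ⊔ JS K V := by
  rw [JS, Set.image_union, Ideal.span_union]; rfl

lemma JS_Up (u : Pt) : JS K {b | u ≤ b} = Ideal.span {mono K u} := by
  apply le_antisymm
  · rw [JS, Ideal.span_le]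
    rintro _ ⟨b, hb, rfl⟩
    rw [SetLike.mem_coe, Ideal.mem_span_singleton']
    exact ⟨mono K (b - u), by
      simp only [mono, monomial_mul, one_mul]
      rw [tsub_add_cancel_of_le hb]⟩
  · rw [Ideal.span_le, Set.singleton_subset_iff]
    exact Ideal.subset_span ⟨u, le_refl u, rfl⟩

lemma upSet_shift {U : Set Pt} (hU : UpSet U) (u : Pt) : UpSet {v : Pt | v + u ∈ U} :=
  fun _ ha _ hb => hU ha (add_le_add_left hb u)

lemma colon_JS {U : Set Pt} (hU : UpSet U) (u : Pt) :
    (JS K U).colon (Ideal.span {mono K u}) = JS K {v : Pt | v + u ∈ U} := by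
  ext g
  rw [Ideal.mem_colon_span_singleton, mem_JS_of_upSet hU, mem_JS_of_upSet (upSet_shift hU u)]
  constructor
  · intro h a ha
    refine h (a + u) ?_
    rw [mem_support_iff, mono, coeff_mul_monomial', if_pos le_add_self,
      add_tsub_cancel_right, mul_one]
    exact mem_support_iff.mp ha
  · intro h b hb
    rw [mem_support_iff, mono, coeff_mul_monomial'] at hb
    by_cases hub : u ≤ b
    · rw [if_pos hub, mul_one] at hb
      have := h _ (mem_support_iff.mpr hb)
      simp only [Set.mem_setOf_eq, tsub_add_cancel_of_le hub] at this
      exact this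
    · rw [if_neg hub] at hb; exact absurd rfl hb

end Aux

section Primes

variable (K : Type*) [Field K]

noncomputable def Jxy : Ideal (MvPolynomial (Fin 2) K) := JS K {a | a ≠ 0}
noncomputable def Jx : Ideal (MvPolynomial (Fin 2) K) := JS K {a | Finsupp.single 0 1 ≤ a}
noncomputable def Jy : Ideal (MvPolynomial (Fin 2) K) := JS K {a | Finsupp.single 1 1 ≤ a}

lemma Jxy_eq_ker : Jxy K = RingHom.ker (constantCoeff : MvPolynomial (Fin 2) K →+* K) := by
  ext p
  rw [Jxy, mem_JS, RingHom.mem_ker]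
  have hcc : constantCoeff p = coeff 0 p := rfl
  rw [hcc]
  constructor
  · intro h
    by_contra hc
    obtain ⟨b, hb, hb0⟩ := h 0 (mem_support_iff.mpr hc)
    exact hb (le_antisymm hb0 zero_le)
  · intro h a ha
    refine ⟨a, fun h0 => ?_, le_rfl⟩
    rw [h0] at ha; exact mem_support_iff.mp ha h

lemma Jxy_isPrime : (Jxy K).IsPrime := by
  rw [Jxy_eq_ker]; exact RingHom.ker_isPrime _

lemma isPrime_span_singleton_of_equiv {R S : Type*} [CommRing R] [CommRing S] (e : R ≃+* S)
    (r : R) (h : (Ideal.span {e r}).IsPrime) : (Ideal.span {r}).IsPrime := by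
  have hEq : Ideal.span {r} = Ideal.comap (e : R →+* S) (Ideal.span {e r}) := by
    ext p
    simp only [Ideal.mem_comap, Ideal.mem_span_singleton, RingEquiv.coe_toRingHom]
    constructor
    · exact fun hd => map_dvd e hd
    · intro hd
      have := map_dvd e.symm hd
      simpa using this
  rw [hEq]
  exact h.comap _

lemma isPrime_span_X0 : (Ideal.span {(X 0 : MvPolynomial (Fin 2) K)}).IsPrime := by
  apply isPrime_span_singleton_of_equiv (MvPolynomial.finSuccEquiv K 1).toRingEquiv
  have h1 : ((MvPolynomial.finSuccEquiv K 1).toRingEquiv (X 0)) =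
      (Polynomial.X : Polynomial (MvPolynomial (Fin 1) K)) := finSuccEquiv_X_zero
  rw [h1]
  exact (Ideal.span_singleton_prime Polynomial.X_ne_zero).mpr Polynomial.prime_X

lemma isPrime_span_X1 : (Ideal.span {(X 1 : MvPolynomial (Fin 2) K)}).IsPrime := by
  apply isPrime_span_singleton_of_equiv (renameEquiv K (Equiv.swap (0 : Fin 2) 1)).toRingEquiv
  have h1 : ((renameEquiv K (Equiv.swap (0 : Fin 2) 1)).toRingEquiv (X 1)) =
      (X 0 : MvPolynomial (Fin 2) K) := by
    show (rename (Equiv.swap (0 : Fin 2) 1)) (X 1) = X 0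
    rw [rename_X, Equiv.swap_apply_right]
  rw [h1]
  exact isPrime_span_X0 K

lemma mono_single0 : mono K (Finsupp.single 0 1) = (X 0 : MvPolynomial (Fin 2) K) := rfl
lemma mono_single1 : mono K (Finsupp.single 1 1) = (X 1 : MvPolynomial (Fin 2) K) := rfl

lemma Jx_isPrime : (Jx K).IsPrime := by
  rw [Jx, show {a : Pt | Finsupp.single 0 1 ≤ a} = {b : Pt | Finsupp.single 0 1 ≤ b} from rfl,
    JS_Up, mono_single0]
  exact isPrime_span_X0 K

lemma Jy_isPrime : (Jy K).IsPrime := by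
  rw [Jy, JS_Up, mono_single1]
  exact isPrime_span_X1 K

lemma X0_mem_Jxy : (X 0 : MvPolynomial (Fin 2) K) ∈ Jxy K := by
  rw [← mono_single0, Jxy, mono_mem_JS]
  exact ⟨Finsupp.single 0 1, by simp [Finsupp.single_eq_zero], le_rfl⟩

lemma X1_mem_Jxy : (X 1 : MvPolynomial (Fin 2) K) ∈ Jxy K := by
  rw [← mono_single1, Jxy, mono_mem_JS]
  exact ⟨Finsupp.single 1 1, by simp [Finsupp.single_eq_zero], le_rfl⟩

lemma X1_mem_Jy : (X 1 : MvPolynomial (Fin 2) K) ∈ Jy K := by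
  rw [← mono_single1, Jy, mono_mem_JS]
  exact ⟨Finsupp.single 1 1, Set.mem_setOf_eq ▸ le_refl (Finsupp.single (1 : Fin 2) 1), le_rfl⟩

lemma X1_not_mem_Jx : (X 1 : MvPolynomial (Fin 2) K) ∉ Jx K := by
  rw [← mono_single1, Jx, mono_mem_JS]
  rintro ⟨b, hb, hble⟩
  have h := Finsupp.single_le_iff.mp (le_trans hb hble)
  simp [Finsupp.single_apply] at h

lemma X0_not_mem_Jy : (X 0 : MvPolynomial (Fin 2) K) ∉ Jy K := by
  rw [← mono_single0, Jy, mono_mem_JS]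
  rintro ⟨b, hb, hble⟩
  have h := Finsupp.single_le_iff.mp (le_trans hb hble)
  simp [Finsupp.single_apply] at h

lemma not_Jxy_le_Jy : ¬ (Jxy K ≤ Jy K) := fun h => X0_not_mem_Jy K (h (X0_mem_Jxy K))
lemma not_Jxy_le_Jx : ¬ (Jxy K ≤ Jx K) := fun h => X1_not_mem_Jx K (h (X1_mem_Jxy K))
lemma not_Jy_le_Jx : ¬ (Jy K ≤ Jx K) := fun h => X1_not_mem_Jx K (h (X1_mem_Jy K))

end Primes


section Good

variable (K : Type*) [Field K]

def GoodF (U : Set Pt) (Ps : Set (Ideal (MvPolynomial (Fin 2) K))) : Prop :=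
  ∃ (r : ℕ) (c : Fin (r + 1) → Ideal (MvPolynomial (Fin 2) K)) (u : Fin r → Pt),
    IsPrettyCleanFiltration (JS K U) c u ∧ ∀ j, filtFactor c u j ∈ Ps

variable {K}

lemma goodF_mono {U : Set Pt} {Ps Ps' : Set (Ideal (MvPolynomial (Fin 2) K))}
    (h : Ps ⊆ Ps') (hg : GoodF K U Ps) : GoodF K U Ps' := by
  obtain ⟨r, c, u, h1, h2⟩ := hg
  exact ⟨r, c, u, h1, fun j => h (h2 j)⟩

lemma goodF_congr {U V : Set Pt} (hUV : JS K U = JS K V) {Ps}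
    (hg : GoodF K U Ps) : GoodF K V Ps := by
  obtain ⟨r, c, u, h1, h2⟩ := hg
  exact ⟨r, c, u, hUV ▸ h1, h2⟩

lemma goodF_of_top {U : Set Pt} (h : JS K U = ⊤)
    (Ps : Set (Ideal (MvPolynomial (Fin 2) K))) : GoodF K U Ps :=
  ⟨0, fun _ => ⊤, Fin.elim0,
    ⟨⟨h.symm, rfl, fun j => j.elim0, fun j => j.elim0⟩, fun i => i.elim0⟩, fun j => j.elim0⟩

lemma goodF_prepend {U : Set Pt} (u : Pt) {Ps : Set (Ideal (MvPolynomial (Fin 2) K))}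
    (hprime : ((JS K U).colon (Ideal.span {mono K u})).IsPrime)
    (hg : GoodF K (U ∪ {b | u ≤ b}) Ps)
    (hcomp : ∀ P' ∈ Ps, (JS K U).colon (Ideal.span {mono K u}) ≤ P' →
      (JS K U).colon (Ideal.span {mono K u}) = P') :
    GoodF K U (insert ((JS K U).colon (Ideal.span {mono K u})) Ps) := by
  obtain ⟨r, c, uu, ⟨⟨hc0, hctop, hstep, hcolon⟩, hpc⟩, hfac⟩ := hg
  refine ⟨r + 1, Fin.cons (JS K U) c, Fin.cons u uu, ?_⟩
  have hf0 : filtFactor (Fin.cons (JS K U) c) (Fin.cons u uu) 0 =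
      (JS K U).colon (Ideal.span {mono K u}) := by
    simp [filtFactor, Fin.castSucc_zero, Fin.cons_zero]
  have hfs : ∀ k : Fin r, filtFactor (Fin.cons (JS K U) c) (Fin.cons u uu) (Fin.succ k) =
      filtFactor c uu k := by
    intro k
    simp only [filtFactor, ← Fin.succ_castSucc, Fin.cons_succ]
  refine ⟨⟨⟨Fin.cons_zero _ _, ?_, ?_, ?_⟩, ?_⟩, ?_⟩
  · rw [← Fin.succ_last, Fin.cons_succ]; exact hctop
  · intro j
    induction j using Fin.cases with
    | zero =>
      simp only [Fin.cons_succ, Fin.castSucc_zero, Fin.cons_zero]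
      rw [hc0, JS_union, JS_Up]
    | succ i =>
      simp only [← Fin.succ_castSucc, Fin.cons_succ]
      exact hstep i
  · intro j
    induction j using Fin.cases with
    | zero =>
      simp only [Fin.castSucc_zero, Fin.cons_zero]
      exact hprime
    | succ i =>
      simp only [← Fin.succ_castSucc, Fin.cons_succ]
      exact hcolon i
  · intro i j hij hle
    induction i using Fin.cases with
    | zero =>
      induction j using Fin.cases with
      | zero => exact absurd hij (lt_irrefl _)
      | succ k =>
        rw [hf0, hfs k] at hle ⊢
        exact hcomp _ (hfac k) hle
    | succ i0 =>
      induction j using Fin.cases with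
      | zero => exact absurd hij (Fin.not_lt_zero _)
      | succ k =>
        rw [hfs i0, hfs k] at hle ⊢
        exact hpc i0 k (Fin.succ_lt_succ_iff.mp hij) hle
  · intro j
    induction j using Fin.cases with
    | zero => rw [hf0]; exact Set.mem_insert _ _
    | succ k => rw [hfs k]; exact Set.mem_insert_of_mem _ (hfac k)

end Good


section Stages

variable (K : Type*) [Field K]

noncomputable def pt (n m : ℕ) : Pt := Finsupp.single 0 n + Finsupp.single 1 m

lemma pt_apply0 (n m : ℕ) : pt n m 0 = n := by
  simp [pt, Finsupp.single_apply]

lemma pt_apply1 (n m : ℕ) : pt n m 1 = m := by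
  simp [pt, Finsupp.single_apply]

lemma pt_le_iff {n m : ℕ} {a : Pt} : pt n m ≤ a ↔ n ≤ a 0 ∧ m ≤ a 1 := by
  rw [Finsupp.le_def, Fin.forall_fin_two, pt_apply0, pt_apply1]

lemma pt_eta (a : Pt) : pt (a 0) (a 1) = a := by
  refine Finsupp.ext fun i => ?_
  fin_cases i <;> simp [pt, Finsupp.single_apply]

lemma stageC : ∀ i : ℕ, GoodF K {a : Pt | i ≤ a 0} {Jx K} := by
  intro i
  induction i with
  | zero =>
    apply goodF_of_top
    rw [Ideal.eq_top_iff_one]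
    have h1 : mono K (0 : Pt) = 1 := by simp [mono]
    rw [← h1, mono_mem_JS]
    exact ⟨0, Nat.zero_le _, le_rfl⟩
  | succ i ih =>
    have hU : UpSet {a : Pt | (i+1) ≤ a 0} :=
      fun a ha b hb => le_trans ha (Finsupp.le_def.mp hb 0)
    have hcolon : (JS K {a : Pt | (i+1) ≤ a 0}).colon
        (Ideal.span {mono K (Finsupp.single 0 i : Pt)}) = Jx K := by
      rw [colon_JS hU]
      congr 1
      ext v
      simp only [Set.mem_setOf_eq, Finsupp.add_apply, Finsupp.single_eq_same,
        Finsupp.single_le_iff]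
      omega
    have hunion : {a : Pt | (i+1) ≤ a 0} ∪ {b : Pt | Finsupp.single 0 i ≤ b} =
        {a : Pt | i ≤ a 0} := by
      ext a
      simp only [Set.mem_union, Set.mem_setOf_eq, Finsupp.single_le_iff]
      omega
    have hstep := goodF_prepend (K := K) (U := {a : Pt | (i+1) ≤ a 0})
      (Finsupp.single 0 i)
      (by rw [hcolon]; exact Jx_isPrime K)
      (by rw [hunion]; exact ih)
      (by intro P' hP' hle
          simp only [Set.mem_singleton_iff] at hP'
          subst hP'
          exact hcolon)
    refine goodF_mono ?_ hstep
    rw [hcolon]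
    simp

lemma stageB : ∀ (j px : ℕ), GoodF K {a : Pt | px ≤ a 0 ∧ j ≤ a 1} {Jy K, Jx K} := by
  intro j
  induction j with
  | zero =>
    intro px
    have hset : {a : Pt | px ≤ a 0 ∧ 0 ≤ a 1} = {a : Pt | px ≤ a 0} := by
      ext a; simp
    rw [hset]
    exact goodF_mono (by simp) (stageC K px)
  | succ j ih =>
    intro px
    have hU : UpSet {a : Pt | px ≤ a 0 ∧ (j+1) ≤ a 1} := fun a ha b hb =>
      ⟨le_trans ha.1 (Finsupp.le_def.mp hb 0), le_trans ha.2 (Finsupp.le_def.mp hb 1)⟩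
    have hcolon : (JS K {a : Pt | px ≤ a 0 ∧ (j+1) ≤ a 1}).colon
        (Ideal.span {mono K (pt px j)}) = Jy K := by
      rw [colon_JS hU]
      congr 1
      ext v
      simp only [Set.mem_setOf_eq, Finsupp.add_apply, pt_apply0, pt_apply1,
        Finsupp.single_le_iff]
      omega
    have hunion : {a : Pt | px ≤ a 0 ∧ (j+1) ≤ a 1} ∪ {b : Pt | pt px j ≤ b} =
        {a : Pt | px ≤ a 0 ∧ j ≤ a 1} := by
      ext a
      simp only [Set.mem_union, Set.mem_setOf_eq, pt_le_iff]
      omega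
    have hstep := goodF_prepend (K := K) (U := {a : Pt | px ≤ a 0 ∧ (j+1) ≤ a 1})
      (pt px j)
      (by rw [hcolon]; exact Jy_isPrime K)
      (by rw [hunion]; exact ih px)
      (by intro P' hP' hle
          rw [hcolon] at hle ⊢
          rcases hP' with hP' | hP'
          · rw [hP']
          · simp only [Set.mem_singleton_iff] at hP'
            rw [hP'] at hle
            exact absurd hle (not_Jy_le_Jx K))
    refine goodF_mono ?_ hstep
    rw [hcolon]
    simp

end Stages


section StageA

variable (K : Type*) [Field K]

lemma goodF_quadrant (px py : ℕ) :
    GoodF K {a : Pt | px ≤ a 0 ∧ py ≤ a 1} {Jxy K, Jy K, Jx K} :=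
  goodF_mono (by intro Q hQ; simp only [Set.mem_insert_iff, Set.mem_singleton_iff] at hQ ⊢; tauto)
    (stageB K py px)

/-- The finite set of "missing" staircase points in the rectangle. -/
def Fset (U : Set Pt) (px py cx cy : ℕ) : Set (ℕ × ℕ) :=
  {w | px ≤ w.1 ∧ w.1 < cx ∧ py ≤ w.2 ∧ w.2 < cy ∧ pt w.1 w.2 ∉ U}

lemma Fset_finite (U : Set Pt) (px py cx cy : ℕ) : (Fset U px py cx cy).Finite := by
  apply Set.Finite.subset ((Set.finite_Ico 0 cx).prod (Set.finite_Ico 0 cy))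
  rintro ⟨n, m⟩ ⟨h1, h2, h3, h4, h5⟩
  exact ⟨⟨Nat.zero_le _, h2⟩, ⟨Nat.zero_le _, h4⟩⟩

lemma stageA : ∀ (N : ℕ) (U : Set Pt) (px py cx cy : ℕ), UpSet U →
    (∀ a ∈ U, px ≤ a 0 ∧ py ≤ a 1) →
    (∀ a : Pt, cx ≤ a 0 → py ≤ a 1 → a ∈ U) →
    (∀ a : Pt, px ≤ a 0 → cy ≤ a 1 → a ∈ U) →
    (Fset U px py cx cy).ncard ≤ N →
    GoodF K U {Jxy K, Jy K, Jx K} := by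
  intro N
  induction N with
  | zero =>
    intro U px py cx cy hU hbnd hcx hcy hcard
    have hFe : Fset U px py cx cy = ∅ :=
      (Set.ncard_eq_zero (Fset_finite U px py cx cy)).mp (Nat.le_zero.mp hcard)
    have hQ : ∀ a : Pt, px ≤ a 0 → py ≤ a 1 → a ∈ U := by
      intro a h0 h1
      by_cases hx : cx ≤ a 0
      · exact hcx a hx h1
      by_cases hy : cy ≤ a 1
      · exact hcy a h0 hy
      push_neg at hx hy
      by_contra hna
      have : (a 0, a 1) ∈ Fset U px py cx cy :=
        ⟨h0, hx, h1, hy, by rw [pt_eta]; exact hna⟩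
      rw [hFe] at this
      exact this
    have hUQ : U = {a : Pt | px ≤ a 0 ∧ py ≤ a 1} :=
      Set.ext fun a => ⟨fun h => hbnd a h, fun h => hQ a h.1 h.2⟩
    rw [hUQ]
    exact goodF_quadrant K px py
  | succ N ihN =>
    intro U px py cx cy hU hbnd hcx hcy hcard
    by_cases hQ : ∀ a : Pt, px ≤ a 0 → py ≤ a 1 → a ∈ U
    · have hUQ : U = {a : Pt | px ≤ a 0 ∧ py ≤ a 1} :=
        Set.ext fun a => ⟨fun h => hbnd a h, fun h => hQ a h.1 h.2⟩
      rw [hUQ]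
      exact goodF_quadrant K px py
    push_neg at hQ
    obtain ⟨a, h0, h1, hna⟩ := hQ
    have hax : a 0 < cx := by
      by_contra h; push_neg at h; exact hna (hcx a h h1)
    have hay : a 1 < cy := by
      by_contra h; push_neg at h; exact hna (hcy a h0 h)
    have hFne : (Fset U px py cx cy).Nonempty :=
      ⟨(a 0, a 1), ⟨h0, hax, h1, hay, by rw [pt_eta]; exact hna⟩⟩
    obtain ⟨q, hqF, hqmax⟩ := Set.exists_max_image (Fset U px py cx cy)
      (fun w => w.1 + w.2) (Fset_finite U px py cx cy) hFne
    obtain ⟨hq0, hq0', hq1, hq1', hqU⟩ := id hqF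
    have hcolonset : {v : Pt | v + pt q.1 q.2 ∈ U} = {a : Pt | a ≠ 0} := by
      ext v
      simp only [Set.mem_setOf_eq]
      constructor
      · intro hvU hv0
        rw [hv0, zero_add] at hvU
        exact hqU hvU
      · intro hv
        by_contra hw
        set w := v + pt q.1 q.2 with hwdef
        have hw0 : w 0 = v 0 + q.1 := by rw [hwdef, Finsupp.add_apply, pt_apply0]
        have hw1 : w 1 = v 1 + q.2 := by rw [hwdef, Finsupp.add_apply, pt_apply1]
        have hwx : w 0 < cx := by
          by_contra hh; push_neg at hh
          exact hw (hcx w hh (by omega))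
        have hwy : w 1 < cy := by
          by_contra hh; push_neg at hh
          exact hw (hcy w (by omega) hh)
        have hwF : (w 0, w 1) ∈ Fset U px py cx cy :=
          ⟨by omega, hwx, by omega, hwy, by rw [pt_eta]; exact hw⟩
        have hmax := hqmax _ hwF
        simp only at hmax
        have hv01 : 1 ≤ v 0 + v 1 := by
          by_contra hc; push_neg at hc
          have hv0 : v 0 = 0 := by omega
          have hv1 : v 1 = 0 := by omega
          exact hv (by rw [← pt_eta v, hv0, hv1]; simp [pt])
        omega
    have hcolon : (JS K U).colon (Ideal.span {mono K (pt q.1 q.2)}) = Jxy K := by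
      rw [colon_JS hU, hcolonset]; rfl
    have hU' : UpSet (U ∪ {b : Pt | pt q.1 q.2 ≤ b}) := by
      rintro b (hb | hb) c hbc
      · exact Or.inl (hU hb hbc)
      · exact Or.inr (le_trans hb hbc)
    have hbnd' : ∀ b ∈ (U ∪ {b : Pt | pt q.1 q.2 ≤ b}), px ≤ b 0 ∧ py ≤ b 1 := by
      rintro b (hb | hb)
      · exact hbnd b hb
      · obtain ⟨hb0, hb1⟩ := pt_le_iff.mp hb
        exact ⟨by omega, by omega⟩
    have hcard' : (Fset (U ∪ {b : Pt | pt q.1 q.2 ≤ b}) px py cx cy).ncard ≤ N := by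
      have hsub : Fset (U ∪ {b : Pt | pt q.1 q.2 ≤ b}) px py cx cy ⊆
          (Fset U px py cx cy) \ {q} := by
        rintro w ⟨hw1, hw2, hw3, hw4, hw5⟩
        refine ⟨⟨hw1, hw2, hw3, hw4, fun hwU => hw5 (Or.inl hwU)⟩, ?_⟩
        simp only [Set.mem_singleton_iff]
        intro hwq
        exact hw5 (Or.inr (by rw [hwq]; exact Set.mem_setOf_eq ▸ le_refl (pt q.1 q.2)))
      have h1 := Set.ncard_le_ncard hsub
        ((Fset_finite U px py cx cy).subset Set.diff_subset)
      have h2 := Set.ncard_diff_singleton_of_mem hqF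
      have h3 : 0 < (Fset U px py cx cy).ncard :=
        (Set.ncard_pos (Fset_finite U px py cx cy)).mpr ⟨q, hqF⟩
      omega
    have hg' := ihN (U ∪ {b : Pt | pt q.1 q.2 ≤ b}) px py cx cy hU' hbnd'
      (fun b hb hb' => Or.inl (hcx b hb hb'))
      (fun b hb hb' => Or.inl (hcy b hb hb'))
      hcard'
    have hstep := goodF_prepend (K := K) (U := U) (pt q.1 q.2)
      (by rw [hcolon]; exact Jxy_isPrime K)
      hg'
      (by intro P' hP' hle
          rw [hcolon] at hle ⊢
          rcases hP' with hP' | hP' | hP'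
          · rw [hP']
          · rw [hP'] at hle
            exact absurd hle (not_Jxy_le_Jy K)
          · simp only [Set.mem_singleton_iff] at hP'
            rw [hP'] at hle
            exact absurd hle (not_Jxy_le_Jx K))
    refine goodF_mono ?_ hstep
    rw [hcolon]
    intro Q hQ
    simp only [Set.mem_insert_iff, Set.mem_singleton_iff] at hQ ⊢
    tauto

end StageA



/-- Every monomial ideal in `S = K[x,y]` is pretty clean. -/
theorem prettyClean_of_two_variables
    {K : Type*} [Field K] (I : Ideal (MvPolynomial (Fin 2) K))
    (hI : IsMonomialIdeal I) :
    IsPrettyClean I := by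
  obtain ⟨A, hA⟩ := hI
  have hIJS : I = JS K A := hA
  by_cases hAe : A = ∅
  · -- `I = ⊥`; a one-step filtration with factor `⊥` works.
    have hIbot : I = ⊥ := by
      rw [hIJS, hAe, JS, Set.image_empty, Ideal.span_empty]
    have hmono0 : mono K (0 : Fin 2 →₀ ℕ) = 1 := by simp [mono]
    have hcolonbot : ((⊥ : Ideal (MvPolynomial (Fin 2) K)).colon
        (Ideal.span {mono K (0 : Fin 2 →₀ ℕ)})) = ⊥ := by
      ext g
      rw [Ideal.mem_colon_span_singleton, hmono0, mul_one]
    refine ⟨1, ![⊥, ⊤], fun _ => 0, ⟨⟨?_, ?_, ?_, ?_⟩, ?_⟩⟩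
    · rw [hIbot]; rfl
    · rfl
    · intro j
      fin_cases j
      show (![⊥, ⊤] : Fin 2 → Ideal (MvPolynomial (Fin 2) K)) 1 = ![⊥, ⊤] 0 ⊔ _
      rw [hmono0, Ideal.span_singleton_one]
      simp
    · intro j
      fin_cases j
      show (((![⊥, ⊤] : Fin 2 → Ideal (MvPolynomial (Fin 2) K)) 0).colon _).IsPrime
      rw [show ((![⊥, ⊤] : Fin 2 → Ideal (MvPolynomial (Fin 2) K)) 0) = ⊥ from rfl, hcolonbot]
      exact Ideal.bot_prime
    · intro i j hij
      fin_cases i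
      fin_cases j
      exact absurd hij (lt_irrefl _)
  · -- `A` nonempty: use the staircase decomposition.
    set U : Set Pt := {a | ∃ b ∈ A, b ≤ a} with hUdef
    have hJS : JS K A = JS K U := by
      ext p
      rw [mem_JS, mem_JS]
      refine forall₂_congr fun a _ => ⟨?_, ?_⟩
      · rintro ⟨b, hb, hba⟩
        exact ⟨b, ⟨b, hb, le_refl b⟩, hba⟩
      · rintro ⟨b, ⟨c, hc, hcb⟩, hba⟩
        exact ⟨c, hc, le_trans hcb hba⟩
    obtain ⟨b0, hb0⟩ := Set.nonempty_iff_ne_empty.mpr hAe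
    have hUne : U.Nonempty := ⟨b0, ⟨b0, hb0, le_refl b0⟩⟩
    have hU : UpSet U := by
      rintro a ⟨b, hb, hba⟩ c hac
      exact ⟨b, hb, le_trans hba hac⟩
    have hpxne : ((fun a : Pt => a 0) '' U).Nonempty := hUne.image _
    have hpyne : ((fun a : Pt => a 1) '' U).Nonempty := hUne.image _
    set px := sInf ((fun a : Pt => a 0) '' U) with hpxdef
    set py := sInf ((fun a : Pt => a 1) '' U) with hpydef
    have hpx : ∀ a ∈ U, px ≤ a 0 := fun a ha => Nat.sInf_le ⟨a, ha, rfl⟩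
    have hpy : ∀ a ∈ U, py ≤ a 1 := fun a ha => Nat.sInf_le ⟨a, ha, rfl⟩
    obtain ⟨w1, hw1U, hw1⟩ := Nat.sInf_mem hpyne
    obtain ⟨w2, hw2U, hw2⟩ := Nat.sInf_mem hpxne
    have hcx : ∀ a : Pt, w1 0 ≤ a 0 → py ≤ a 1 → a ∈ U := by
      intro a ha0 ha1
      refine hU hw1U (Finsupp.le_def.mpr ?_)
      rw [Fin.forall_fin_two]
      exact ⟨ha0, by simp only [hpydef] at ha1; exact le_of_eq_of_le (by simpa using hw1) ha1⟩
    have hcy : ∀ a : Pt, px ≤ a 0 → w2 1 ≤ a 1 → a ∈ U := by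
      intro a ha0 ha1
      refine hU hw2U (Finsupp.le_def.mpr ?_)
      rw [Fin.forall_fin_two]
      exact ⟨by simp only [hpxdef] at ha0; exact le_of_eq_of_le (by simpa using hw2) ha0, ha1⟩
    have hgood := stageA K (Fset U px py (w1 0) (w2 1)).ncard U px py (w1 0) (w2 1)
      hU (fun a ha => ⟨hpx a ha, hpy a ha⟩) hcx hcy le_rfl
    obtain ⟨r, c, u, h1, _⟩ := hgood
    exact ⟨r, c, u, by rwa [hIJS, hJS]⟩
end

section
/- Let I be a monomial ideal of height 1 in S = K[x_1,x_2,x_3]. Then I = uJ where u is a monomial of S and J is a monomial ideal of height ≥ 2; moreover, I is pretty clean if and only if J is pretty clean. -/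
open MvPolynomial Pointwise

/-- The graded maximal ideal `m = (x_i : i ∈ σ)`. -/
noncomputable def maxIdeal (K : Type*) [Field K] (σ : Type*) :
    Ideal (MvPolynomial σ K) :=
  Ideal.span (Set.range (X : σ → MvPolynomial σ K))

/-- The saturation `Ĩ = I : m^∞ = ⋃ₖ (I : mᵏ)`. -/
noncomputable def saturation {K : Type*} [Field K] {σ : Type*}
    (I : Ideal (MvPolynomial σ K)) : Ideal (MvPolynomial σ K) :=
  ⨆ k : ℕ, I.colon ((maxIdeal K σ ^ k : Ideal (MvPolynomial σ K)) : Set (MvPolynomial σ K))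

/-- The height of an ideal: the infimum of heights of primes minimal over it. -/
noncomputable def idealHeight {R : Type*} [CommRing R] (I : Ideal R) : ℕ∞ :=
  ⨅ P : {P : Ideal R // P ∈ I.minimalPrimes},
    Order.height (⟨P.1, P.2.1.1⟩ : PrimeSpectrum R)


set_option linter.unusedSectionVars false

section Aux
variable {K : Type*} [Field K] {σ : Type*}

lemma mono_mul (a b : σ →₀ ℕ) : mono K a * mono K b = mono K (a + b) := by
  simp [mono, monomial_mul]

lemma mono_zero : mono K (0 : σ →₀ ℕ) = 1 := by simp [mono]

lemma mono_ne_zero (a : σ →₀ ℕ) : mono K a ≠ 0 := by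
  simp [mono, monomial_eq_zero]

/-- Membership of a polynomial in a monomial ideal: necessary condition on supports. -/
lemma support_dvd_of_mem_span {A : Set (σ →₀ ℕ)} {p : MvPolynomial σ K}
    (hp : p ∈ Ideal.span ((fun a => mono K a) '' A)) :
    ∀ b ∈ p.support, ∃ a ∈ A, a ≤ b := by
  refine Submodule.span_induction ?_ ?_ ?_ ?_ hp
  · rintro x ⟨a, ha, rfl⟩ b hb
    refine ⟨a, ha, ?_⟩
    classical
    have := MvPolynomial.support_monomial_subset (s := a) (a := (1:K)) hb
    simp_all
  · intro b hb; simp at hb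
  · intro x y _ _ hx hy b hb
    classical
    rcases Finset.mem_union.1 (MvPolynomial.support_add hb) with h | h
    · exact hx b h
    · exact hy b h
  · intro q x _ hx b hb
    classical
    have := MvPolynomial.support_mul (R := K) q x hb
    rw [Finset.mem_add] at this
    obtain ⟨c, hc, d, hd, rfl⟩ := this
    obtain ⟨a, ha, hle⟩ := hx d hd
    exact ⟨a, ha, hle.trans (le_add_self)⟩

lemma mem_span_of_support {A : Set (σ →₀ ℕ)} {p : MvPolynomial σ K}
    (h : ∀ b ∈ p.support, ∃ a ∈ A, a ≤ b) :
    p ∈ Ideal.span ((fun a => mono K a) '' A) := by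
  classical
  rw [MvPolynomial.as_sum p]
  refine Ideal.sum_mem _ fun b hb => ?_
  obtain ⟨a, ha, hle⟩ := h b hb
  have : (monomial b) (coeff b p) = (C (coeff b p) * mono K (b - a)) * mono K a := by
    rw [mul_assoc, mono_mul, tsub_add_cancel_of_le hle]
    simp [mono, MvPolynomial.C_mul_monomial]
  rw [this]
  exact Ideal.mul_mem_left _ _ (Ideal.subset_span ⟨a, ha, rfl⟩)

lemma mem_span_mono_iff {A : Set (σ →₀ ℕ)} {p : MvPolynomial σ K} :
    p ∈ Ideal.span ((fun a => mono K a) '' A) ↔ ∀ b ∈ p.support, ∃ a ∈ A, a ≤ b :=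
  ⟨support_dvd_of_mem_span, mem_span_of_support⟩

lemma mono_mem_span_iff {A : Set (σ →₀ ℕ)} {b : σ →₀ ℕ} :
    mono K b ∈ Ideal.span ((fun a => mono K a) '' A) ↔ ∃ a ∈ A, a ≤ b := by
  rw [mem_span_mono_iff]
  constructor
  · intro h
    classical
    refine h b ?_
    rw [MvPolynomial.mem_support_iff]
    simp [mono, MvPolynomial.coeff_monomial]
  · intro h c hc
    classical
    have : c = b := by
      have := MvPolynomial.support_monomial_subset (s := b) (a := (1:K)) hc
      simpa using this
    subst this; exact h

end Aux

section Aux2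
variable {R : Type*} [CommRing R] [IsDomain R]

lemma colon_colon_singleton (I : Ideal R) (x y : R) :
    (I.colon (Ideal.span {x})).colon (Ideal.span {y}) = I.colon (Ideal.span {x * y}) := by
  ext p
  simp only [Ideal.mem_colon_span_singleton]
  rw [mul_comm x y, ← mul_assoc]

lemma top_colon (J : Ideal R) : (⊤ : Ideal R).colon J = ⊤ := by
  rw [eq_top_iff]
  intro p _
  exact Submodule.mem_colon.2 fun q _ => trivial

lemma prime_colon_singleton {P : Ideal R} (hP : P.IsPrime) {z : R} (hz : z ∉ P) :
    P.colon (Ideal.span {z}) = P := by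
  ext p
  rw [Ideal.mem_colon_span_singleton]
  constructor
  · intro h
    rcases hP.mem_or_mem h with h | h
    · exact h
    · exact absurd h hz
  · intro h; exact Ideal.mul_mem_right _ _ h

lemma mul_colon_mul_singleton {m : R} (hm : m ≠ 0) (J : Ideal R) (v : R) :
    (Ideal.span {m} * J).colon (Ideal.span {m * v}) = J.colon (Ideal.span {v}) := by
  ext p
  rw [Ideal.mem_colon_span_singleton, Ideal.mem_colon_span_singleton]
  rw [Ideal.mem_span_singleton_mul]
  constructor
  · rintro ⟨y, hy, h⟩
    have : y = p * v := by
      apply mul_left_cancel₀ hm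
      rw [h]; ring
    rwa [← this]
  · intro h
    exact ⟨p * v, h, by ring⟩

lemma span_singleton_mul_colon {m n : R} (hn : n ≠ 0) :
    (Ideal.span {m * n}).colon (Ideal.span {n}) = Ideal.span {m} := by
  have h2 : (Ideal.span {m} : Ideal R).colon (Ideal.span {(1 : R)}) = Ideal.span {m} := by
    ext p
    rw [Ideal.mem_colon_span_singleton, mul_one]
  have := mul_colon_mul_singleton hn (Ideal.span {m}) 1
  rw [mul_one, h2, Ideal.span_singleton_mul_span_singleton, mul_comm n m] at this
  exact this

end Aux2

section Aux3
variable {K : Type*} [Field K] {σ : Type*}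

lemma colon_span_mono (A : Set (σ →₀ ℕ)) (u : σ →₀ ℕ) :
    (Ideal.span ((fun a => mono K a) '' A)).colon (Ideal.span {mono K u})
      = Ideal.span ((fun a => mono K a) '' ((fun a => a - u) '' A)) := by
  classical
  ext p
  rw [Ideal.mem_colon_span_singleton, mem_span_mono_iff, mem_span_mono_iff]
  constructor
  · intro h b hb
    have hmem : b + u ∈ (p * mono K u).support := by
      rw [MvPolynomial.mem_support_iff, mono,
        MvPolynomial.coeff_mul_monomial, mul_one]
      exact MvPolynomial.mem_support_iff.1 hb
    obtain ⟨a, ha, hle⟩ := h _ hmem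
    exact ⟨a - u, ⟨a, ha, rfl⟩, tsub_le_iff_right.2 hle⟩
  · intro h c hc
    have := MvPolynomial.support_mul (R := K) p (mono K u) hc
    rw [Finset.mem_add] at this
    obtain ⟨b, hb, d, hd, rfl⟩ := this
    have hd' : d = u := by
      have := MvPolynomial.support_monomial_subset (s := u) (a := (1:K)) hd
      simpa using this
    rw [hd']
    obtain ⟨a', ⟨a, ha, rfl⟩, hle⟩ := h b hb
    exact ⟨a, ha, le_tsub_add.trans (add_le_add hle le_rfl)⟩

lemma span_mono_sup_mono (A : Set (σ →₀ ℕ)) (l : σ →₀ ℕ) :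
    Ideal.span ((fun a => mono K a) '' A) ⊔ Ideal.span {mono K l}
      = Ideal.span ((fun a => mono K a) '' (A ∪ {l})) := by
  rw [Set.image_union, Ideal.span_union, Set.image_singleton]

lemma colon_sup_mono (A : Set (σ →₀ ℕ)) (l u : σ →₀ ℕ) :
    ((Ideal.span ((fun a => mono K a) '' A) ⊔ Ideal.span {mono K l}).colon
        (Ideal.span {mono K u}))
      = (Ideal.span ((fun a => mono K a) '' A)).colon (Ideal.span {mono K u})
          ⊔ Ideal.span {mono K (l - u)} := by
  rw [span_mono_sup_mono, colon_span_mono, colon_span_mono, Set.image_union,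
    Set.image_union, Ideal.span_union, Set.image_singleton, Set.image_singleton]

end Aux3

section ListFilt
variable {K : Type*} [Field K] {σ : Type*}

noncomputable def runF (I : Ideal (MvPolynomial σ K)) :
    List (σ →₀ ℕ) → Ideal (MvPolynomial σ K)
  | [] => I
  | l :: L => runF (I ⊔ Ideal.span {mono K l}) L

def StepsF (I : Ideal (MvPolynomial σ K)) : List (σ →₀ ℕ) → Prop
  | [] => True
  | l :: L => (I.colon (Ideal.span {mono K l})).IsPrime ∧
      StepsF (I ⊔ Ideal.span {mono K l}) L

noncomputable def facsF (I : Ideal (MvPolynomial σ K)) :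
    List (σ →₀ ℕ) → List (Ideal (MvPolynomial σ K))
  | [] => []
  | l :: L => I.colon (Ideal.span {mono K l}) :: facsF (I ⊔ Ideal.span {mono K l}) L

@[simp] lemma runF_nil (I : Ideal (MvPolynomial σ K)) : runF I [] = I := rfl
@[simp] lemma runF_cons (I : Ideal (MvPolynomial σ K)) (l L) :
    runF I (l :: L) = runF (I ⊔ Ideal.span {mono K l}) L := rfl
@[simp] lemma facsF_nil (I : Ideal (MvPolynomial σ K)) : facsF I [] = [] := rfl
@[simp] lemma facsF_cons (I : Ideal (MvPolynomial σ K)) (l L) :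
    facsF I (l :: L) = I.colon (Ideal.span {mono K l})
      :: facsF (I ⊔ Ideal.span {mono K l}) L := rfl

lemma runF_append (I : Ideal (MvPolynomial σ K)) (L1 L2) :
    runF I (L1 ++ L2) = runF (runF I L1) L2 := by
  induction L1 generalizing I with
  | nil => rfl
  | cons l L ih => simp [ih]

lemma stepsF_append {I : Ideal (MvPolynomial σ K)} {L1 L2}
    (h1 : StepsF I L1) (h2 : StepsF (runF I L1) L2) : StepsF I (L1 ++ L2) := by
  induction L1 generalizing I with
  | nil => exact h2
  | cons l L ih => exact ⟨h1.1, ih h1.2 h2⟩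

lemma facsF_append (I : Ideal (MvPolynomial σ K)) (L1 L2) :
    facsF I (L1 ++ L2) = facsF I L1 ++ facsF (runF I L1) L2 := by
  induction L1 generalizing I with
  | nil => rfl
  | cons l L ih => simp [ih]

lemma le_facsF {I : Ideal (MvPolynomial σ K)} {L} :
    ∀ P ∈ facsF I L, I ≤ P := by
  induction L generalizing I with
  | nil => simp
  | cons l L ih =>
    intro P hP
    rcases List.mem_cons.1 hP with rfl | hP
    · intro x hx
      exact Ideal.mem_colon_span_singleton.2 (Ideal.mul_mem_right _ _ hx)
    · exact le_sup_left.trans (ih P hP)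

lemma facsF_length (I : Ideal (MvPolynomial σ K)) (L) :
    (facsF I L).length = L.length := by
  induction L generalizing I with
  | nil => rfl
  | cons l L ih => simp [ih]

lemma stepsF_take_colon {I : Ideal (MvPolynomial σ K)} {L} (hS : StepsF I L) :
    ∀ (j : ℕ) (h : j < L.length),
      ((runF I (L.take j)).colon (Ideal.span {mono K (L.get ⟨j, h⟩)})).IsPrime := by
  induction L generalizing I with
  | nil => intro j h; simp at h
  | cons l L ih =>
    intro j h
    cases j with
    | zero => exact hS.1
    | succ j => exact ih hS.2 j (Nat.succ_lt_succ_iff.1 h)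

lemma facsF_get {I : Ideal (MvPolynomial σ K)} (L) :
    ∀ (j : ℕ) (h : j < L.length),
      (facsF I L).get ⟨j, by rw [facsF_length]; exact h⟩ =
        (runF I (L.take j)).colon (Ideal.span {mono K (L.get ⟨j, h⟩)}) := by
  induction L generalizing I with
  | nil => intro j h; simp at h
  | cons l L ih =>
    intro j h
    cases j with
    | zero => rfl
    | succ j => exact ih j (Nat.succ_lt_succ_iff.1 h)

/-- From a list filtration to `IsPrettyClean`. -/
lemma isPrettyClean_of_list {I : Ideal (MvPolynomial σ K)} {L}
    (hS : StepsF I L) (hr : runF I L = ⊤)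
    (hp : (facsF I L).Pairwise fun P Q => P ≤ Q → P = Q) : IsPrettyClean I := by
  classical
  refine ⟨L.length, fun k => runF I (L.take k.val), fun j => L.get ⟨j.val, j.isLt⟩, ?_, ?_⟩
  · refine ⟨by simp, by simp [hr], ?_, ?_⟩
    · intro j
      have ht : L.take (j.val + 1) = L.take j.val ++ [L.get ⟨j.val, j.isLt⟩] := by
        rw [List.take_succ]
        congr
        rw [List.getElem?_eq_getElem j.isLt]
        rfl
      show runF I (L.take (j.succ.val)) = _
      rw [Fin.val_succ, ht, runF_append]
      rfl
    · intro j
      exact stepsF_take_colon hS j.val j.isLt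
  · intro i j hij hle
    have hg : ∀ (k : Fin L.length), filtFactor (fun k : Fin (L.length + 1) =>
        runF I (L.take k.val)) (fun j => L.get ⟨j.val, j.isLt⟩) k
        = (facsF I L).get ⟨k.val, by rw [facsF_length]; exact k.isLt⟩ := by
      intro k
      rw [facsF_get]
      rfl
    rw [hg i, hg j] at hle ⊢
    have := List.pairwise_iff_get.1 hp ⟨i.val, by rw [facsF_length]; exact i.isLt⟩
      ⟨j.val, by rw [facsF_length]; exact j.isLt⟩ (by exact hij)
    exact this hle

/-- From a filtration to a list filtration. -/
lemma list_of_primeFiltration {I : Ideal (MvPolynomial σ K)} {r : ℕ}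
    {c : Fin (r + 1) → Ideal (MvPolynomial σ K)} {u : Fin r → (σ →₀ ℕ)}
    (h : IsPrimeFiltration I c u) :
    StepsF I (List.ofFn u) ∧ runF I (List.ofFn u) = ⊤ ∧
      facsF I (List.ofFn u) = List.ofFn (filtFactor c u) := by
  induction r generalizing I with
  | zero =>
    obtain ⟨h0, hlast, _, _⟩ := h
    have : I = ⊤ := by rw [← h0, ← hlast]; rfl
    simp [this, StepsF]
  | succ r ih =>
    obtain ⟨h0, hlast, h3, h4⟩ := h
    have hc1 : c 1 = I ⊔ Ideal.span {mono K (u 0)} := by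
      have := h3 0
      rw [show (0 : Fin (r+1)).succ = 1 from rfl] at this
      rw [this, show (0 : Fin (r+1)).castSucc = 0 from rfl, h0]
    have hpf : IsPrimeFiltration (I ⊔ Ideal.span {mono K (u 0)})
        (c ∘ Fin.succ) (u ∘ Fin.succ) := by
      refine ⟨by simp [Function.comp, ← hc1], ?_, ?_, ?_⟩
      · show c (Fin.succ (Fin.last r)) = ⊤
        rw [Fin.succ_last]; exact hlast
      · intro j
        show c (Fin.succ j.succ) = c (Fin.succ j.castSucc) ⊔ _
        rw [Fin.succ_castSucc]
        exact h3 j.succ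
      · intro j
        show ((c (Fin.succ j.castSucc)).colon _).IsPrime
        rw [Fin.succ_castSucc]
        exact h4 j.succ
    obtain ⟨ihS, ihr, ihf⟩ := ih hpf
    have hcolon0 : I.colon (Ideal.span {mono K (u 0)}) = filtFactor c u 0 := by
      rw [filtFactor, show (0 : Fin (r+1)).castSucc = 0 from rfl, h0]
    refine ⟨?_, ?_, ?_⟩
    · rw [List.ofFn_succ]
      exact ⟨by rw [hcolon0]; exact h4 0, ihS⟩
    · rw [List.ofFn_succ, runF_cons]
      exact ihr
    · have hff : filtFactor (c ∘ Fin.succ) (u ∘ Fin.succ)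
          = fun j : Fin r => filtFactor c u j.succ := by
        funext j
        show ((c (Fin.succ j.castSucc)).colon _) = _
        rw [Fin.succ_castSucc]
        rfl
      rw [List.ofFn_succ, facsF_cons, List.ofFn_succ (f := filtFactor c u)]
      show Submodule.colon I _ :: facsF _ (List.ofFn (u ∘ Fin.succ)) = _
      rw [ihf, hcolon0, hff]

lemma isPrettyClean_iff_list {I : Ideal (MvPolynomial σ K)} :
    IsPrettyClean I ↔ ∃ L, StepsF I L ∧ runF I L = ⊤ ∧
      (facsF I L).Pairwise fun P Q => P ≤ Q → P = Q := by
  constructor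
  · rintro ⟨r, c, u, hpf, hpc⟩
    obtain ⟨hS, hr, hf⟩ := list_of_primeFiltration hpf
    refine ⟨List.ofFn u, hS, hr, ?_⟩
    rw [hf, List.pairwise_ofFn]
    intro i j hij
    exact hpc i j hij
  · rintro ⟨L, hS, hr, hp⟩
    exact isPrettyClean_of_list hS hr hp

end ListFilt


section XPrime
variable {K : Type*} [Field K] {σ : Type*}

lemma sub_aeval_update_mem (i : σ) [DecidableEq σ] (p : MvPolynomial σ K) :
    p - aeval (Function.update X i 0) p ∈ Ideal.span {(X i : MvPolynomial σ K)} := by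
  induction p using MvPolynomial.induction_on with
  | C a => simp
  | add p q hp hq =>
    rw [map_add]
    have := Ideal.add_mem _ hp hq
    convert this using 1
    ring
  | mul_X p j hp =>
    rw [map_mul, aeval_X]
    have key : p * X j - aeval (Function.update X i 0) p * Function.update X i 0 j
        = (p - aeval (Function.update X i 0) p) * X j
          + aeval (Function.update X i 0) p * (X j - Function.update X i 0 j) := by
      ring
    rw [key]
    refine Ideal.add_mem _ (Ideal.mul_mem_right _ _ hp) (Ideal.mul_mem_left _ _ ?_)
    by_cases h : j = i
    · subst h
      rw [Function.update_self, sub_zero]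
      exact Ideal.subset_span rfl
    · rw [Function.update_of_ne h, sub_self]
      exact Ideal.zero_mem _

lemma span_X_isPrime (i : σ) : (Ideal.span {(X i : MvPolynomial σ K)}).IsPrime := by
  classical
  have hker : Ideal.span {(X i : MvPolynomial σ K)}
      = RingHom.ker ((aeval (Function.update X i 0) :
          MvPolynomial σ K →ₐ[K] MvPolynomial σ K) : MvPolynomial σ K →+* MvPolynomial σ K) := by
    apply le_antisymm
    · rw [Ideal.span_le, Set.singleton_subset_iff]
      simp [RingHom.mem_ker]
    · intro p hp
      rw [RingHom.mem_ker] at hp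
      have := sub_aeval_update_mem (K := K) i p
      rwa [show (aeval (Function.update X i 0)) p
          = ((aeval (Function.update X i 0) :
          MvPolynomial σ K →ₐ[K] MvPolynomial σ K) : MvPolynomial σ K →+* MvPolynomial σ K) p
          from rfl, hp, sub_zero] at this
  rw [hker]
  exact RingHom.ker_isPrime _

end XPrime

section Peel
variable {K : Type*} [Field K] {σ : Type*}

lemma mono_single_one (i : σ) : mono K (Finsupp.single i 1) = X i := by
  simp [mono, MvPolynomial.X]

/-- The list of exponents for the staircase filtration of `S/(x^u)`. -/
noncomputable def fs3 (a b c : ℕ) : Fin 3 →₀ ℕ := Finsupp.equivFunOnFinite.symm ![a, b, c]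

@[simp] lemma fs3_apply (a b c : ℕ) (i : Fin 3) : fs3 a b c i = ![a, b, c] i := rfl

lemma fs3_succ_0 (a b c : ℕ) : fs3 (a+1) b c = fs3 a b c + Finsupp.single 0 1 := by
  ext i
  fin_cases i <;> simp [fs3, Finsupp.single_apply]

lemma fs3_succ_1 (b c : ℕ) : fs3 0 (b+1) c = fs3 0 b c + Finsupp.single 1 1 := by
  ext i
  fin_cases i <;> simp [fs3, Finsupp.single_apply]

lemma fs3_succ_2 (c : ℕ) : fs3 0 0 (c+1) = fs3 0 0 c + Finsupp.single 2 1 := by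
  ext i
  fin_cases i <;> simp [fs3, Finsupp.single_apply]

lemma fs3_zero : fs3 0 0 0 = 0 := by
  ext i
  fin_cases i <;> simp [fs3]

noncomputable def peel3 : ℕ → ℕ → ℕ → List (Fin 3 →₀ ℕ)
  | 0, 0, 0 => []
  | a+1, b, c => fs3 a b c :: peel3 a b c
  | 0, b+1, c => fs3 0 b c :: peel3 0 b c
  | 0, 0, c+1 => fs3 0 0 c :: peel3 0 0 c
  termination_by a b c => a + b + c

end Peel

section Peel2
variable {K : Type*} [Field K] {σ : Type*}

lemma step_sup (v : σ →₀ ℕ) (i : σ) :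
    Ideal.span {mono K (v + Finsupp.single i 1)} ⊔ Ideal.span {mono K v}
      = Ideal.span {mono K v} := by
  refine sup_eq_right.2 (Ideal.span_singleton_le_span_singleton.2 ⟨mono K (Finsupp.single i 1), ?_⟩)
  rw [mono_mul]

lemma step_colon (v : σ →₀ ℕ) (i : σ) :
    (Ideal.span {mono K (v + Finsupp.single i 1)}).colon (Ideal.span {mono K v})
      = Ideal.span {(X i : MvPolynomial σ K)} := by
  have h1 : mono K (v + Finsupp.single i 1) = (X i : MvPolynomial σ K) * mono K v := by
    rw [← mono_single_one, mono_mul, add_comm]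
  rw [h1, span_singleton_mul_colon (mono_ne_zero v)]

lemma peel_step {v : Fin 3 →₀ ℕ} (i : Fin 3) {L : List (Fin 3 →₀ ℕ)}
    (hS : StepsF (Ideal.span {mono K v}) L)
    (hr : runF (Ideal.span {mono K v}) L = ⊤)
    (hf : ∀ P ∈ facsF (Ideal.span {mono K v}) L,
      ∃ i : Fin 3, P = Ideal.span {(X i : MvPolynomial (Fin 3) K)}) :
    StepsF (Ideal.span {mono K (v + Finsupp.single i 1)}) (v :: L) ∧
      runF (Ideal.span {mono K (v + Finsupp.single i 1)}) (v :: L) = ⊤ ∧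
      ∀ P ∈ facsF (Ideal.span {mono K (v + Finsupp.single i 1)}) (v :: L),
        ∃ i : Fin 3, P = Ideal.span {(X i : MvPolynomial (Fin 3) K)} := by
  refine ⟨⟨?_, ?_⟩, ?_, ?_⟩
  · rw [step_colon]; exact span_X_isPrime i
  · rw [step_sup]; exact hS
  · rw [runF_cons, step_sup]; exact hr
  · intro P hP
    rw [facsF_cons, step_sup] at hP
    rcases List.mem_cons.1 hP with rfl | hP
    · exact ⟨i, step_colon v i⟩
    · exact hf P hP

lemma peel3_spec : ∀ a b c : ℕ,
    StepsF (Ideal.span {mono K (fs3 a b c)}) (peel3 a b c) ∧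
      runF (Ideal.span {mono K (fs3 a b c)}) (peel3 a b c) = ⊤ ∧
      ∀ P ∈ facsF (Ideal.span {mono K (fs3 a b c)}) (peel3 a b c),
        ∃ i : Fin 3, P = Ideal.span {(X i : MvPolynomial (Fin 3) K)} := by
  have base : StepsF (Ideal.span {mono K (fs3 0 0 0)}) (peel3 0 0 0) ∧
      runF (Ideal.span {mono K (fs3 0 0 0)}) (peel3 0 0 0) = ⊤ ∧
      ∀ P ∈ facsF (Ideal.span {mono K (fs3 0 0 0)}) (peel3 0 0 0),
        ∃ i : Fin 3, P = Ideal.span {(X i : MvPolynomial (Fin 3) K)} := by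
    rw [fs3_zero, peel3]
    refine ⟨trivial, ?_, by simp⟩
    rw [runF_nil, mono_zero, Ideal.span_singleton_one]
  have hc : ∀ c, StepsF (Ideal.span {mono K (fs3 0 0 c)}) (peel3 0 0 c) ∧
      runF (Ideal.span {mono K (fs3 0 0 c)}) (peel3 0 0 c) = ⊤ ∧
      ∀ P ∈ facsF (Ideal.span {mono K (fs3 0 0 c)}) (peel3 0 0 c),
        ∃ i : Fin 3, P = Ideal.span {(X i : MvPolynomial (Fin 3) K)} := by
    intro c
    induction c with
    | zero => exact base
    | succ c ih =>
      rw [fs3_succ_2, peel3]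
      exact peel_step 2 ih.1 ih.2.1 ih.2.2
  have hb : ∀ b c, StepsF (Ideal.span {mono K (fs3 0 b c)}) (peel3 0 b c) ∧
      runF (Ideal.span {mono K (fs3 0 b c)}) (peel3 0 b c) = ⊤ ∧
      ∀ P ∈ facsF (Ideal.span {mono K (fs3 0 b c)}) (peel3 0 b c),
        ∃ i : Fin 3, P = Ideal.span {(X i : MvPolynomial (Fin 3) K)} := by
    intro b
    induction b with
    | zero => exact hc
    | succ b ih =>
      intro c
      rw [fs3_succ_1, peel3]
      exact peel_step 1 (ih c).1 (ih c).2.1 (ih c).2.2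
  intro a
  induction a with
  | zero => exact hb
  | succ a ih =>
    intro b c
    rw [fs3_succ_0, peel3]
    exact peel_step 0 (ih b c).1 (ih b c).2.1 (ih b c).2.2

lemma fs3_eq (u : Fin 3 →₀ ℕ) : fs3 (u 0) (u 1) (u 2) = u := by
  ext i
  fin_cases i <;> simp [fs3]

end Peel2


section MapConv
variable {K : Type*} [Field K] {σ : Type*}

lemma mul_sup_mono (u l : σ →₀ ℕ) (M : Ideal (MvPolynomial σ K)) :
    (Ideal.span {mono K u} * M) ⊔ Ideal.span {mono K (u + l)}
      = Ideal.span {mono K u} * (M ⊔ Ideal.span {mono K l}) := by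
  rw [Ideal.mul_sup, Ideal.span_singleton_mul_span_singleton, mono_mul]

lemma mul_colon_mono (u l : σ →₀ ℕ) (M : Ideal (MvPolynomial σ K)) :
    (Ideal.span {mono K u} * M).colon (Ideal.span {mono K (u + l)})
      = M.colon (Ideal.span {mono K l}) := by
  rw [← mono_mul, mul_colon_mul_singleton (mono_ne_zero u)]

lemma runF_map_add (u : σ →₀ ℕ) (M : Ideal (MvPolynomial σ K)) (L : List (σ →₀ ℕ)) :
    runF (Ideal.span {mono K u} * M) (L.map (u + ·)) = Ideal.span {mono K u} * runF M L := by
  induction L generalizing M with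
  | nil => rfl
  | cons l L ih => rw [List.map_cons, runF_cons, runF_cons, mul_sup_mono, ih]

lemma stepsF_map_add {u : σ →₀ ℕ} {M : Ideal (MvPolynomial σ K)} {L : List (σ →₀ ℕ)}
    (h : StepsF M L) : StepsF (Ideal.span {mono K u} * M) (L.map (u + ·)) := by
  induction L generalizing M with
  | nil => trivial
  | cons l L ih =>
    refine ⟨?_, ?_⟩
    · rw [mul_colon_mono]; exact h.1
    · rw [mul_sup_mono]; exact ih h.2

lemma facsF_map_add (u : σ →₀ ℕ) (M : Ideal (MvPolynomial σ K)) (L : List (σ →₀ ℕ)) :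
    facsF (Ideal.span {mono K u} * M) (L.map (u + ·)) = facsF M L := by
  induction L generalizing M with
  | nil => rfl
  | cons l L ih =>
    rw [List.map_cons, facsF_cons, facsF_cons, mul_colon_mono, mul_sup_mono, ih]

/-- The key compression lemma: a prime filtration of a monomial ideal `M`
induces (after deleting degenerate steps) one of `M : x^u`,
with factors a sublist of the original factors. -/
lemma conv (u : σ →₀ ℕ) : ∀ (L : List (σ →₀ ℕ)) (M : Ideal (MvPolynomial σ K))
    (A : Set (σ →₀ ℕ)), M = Ideal.span ((fun a => mono K a) '' A) →
    StepsF M L → runF M L = ⊤ →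
    ∃ L', StepsF (M.colon (Ideal.span {mono K u})) L' ∧
      runF (M.colon (Ideal.span {mono K u})) L' = ⊤ ∧
      (facsF (M.colon (Ideal.span {mono K u})) L').Sublist (facsF M L) := by
  intro L
  induction L with
  | nil =>
    intro M A hM _ hr
    rw [runF_nil] at hr
    subst hr
    exact ⟨[], trivial, by rw [runF_nil, top_colon], List.nil_sublist _⟩
  | cons l L ih =>
    intro M A hM hS hr
    obtain ⟨hprime, hS'⟩ := hS
    rw [runF_cons] at hr
    have hsup : M ⊔ Ideal.span {mono K l}
        = Ideal.span ((fun a => mono K a) '' (A ∪ {l})) := by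
      rw [hM, span_mono_sup_mono]
    obtain ⟨L', ihS, ihr, ihsub⟩ := ih (M ⊔ Ideal.span {mono K l}) (A ∪ {l}) hsup hS' hr
    have hkey : (M ⊔ Ideal.span {mono K l}).colon (Ideal.span {mono K u})
        = M.colon (Ideal.span {mono K u}) ⊔ Ideal.span {mono K (l - u)} := by
      rw [hM, colon_sup_mono, ← hM]
    by_cases hdeg : mono K (l - u) ∈ M.colon (Ideal.span {mono K u})
    · have heq : (M ⊔ Ideal.span {mono K l}).colon (Ideal.span {mono K u})
          = M.colon (Ideal.span {mono K u}) := by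
        rw [hkey, sup_eq_left]
        exact (Ideal.span_singleton_le_iff_mem _).2 hdeg
      rw [heq] at ihS ihr ihsub
      exact ⟨L', ihS, ihr, ihsub.trans (List.sublist_cons_self _ _)⟩
    · have hcc : (M.colon (Ideal.span {mono K u})).colon (Ideal.span {mono K (l - u)})
          = (M.colon (Ideal.span {mono K l})).colon (Ideal.span {mono K (u - l)}) := by
        have hexp : u + (l - u) = l + (u - l) := by
          ext i
          simp only [Finsupp.add_apply, Finsupp.tsub_apply]
          omega
        rw [colon_colon_singleton, colon_colon_singleton, mono_mul, mono_mul, hexp]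
      have hnotmem : mono K (u - l) ∉ M.colon (Ideal.span {mono K l}) := by
        intro hmem
        apply hdeg
        have h1 : (1 : MvPolynomial σ K) ∈
            (M.colon (Ideal.span {mono K l})).colon (Ideal.span {mono K (u - l)}) :=
          Ideal.mem_colon_span_singleton.2 (by rwa [one_mul])
        rw [← hcc] at h1
        have h2 := Ideal.mem_colon_span_singleton.1 h1
        rwa [one_mul] at h2
      have hhead : (M.colon (Ideal.span {mono K u})).colon (Ideal.span {mono K (l - u)})
          = M.colon (Ideal.span {mono K l}) := by
        rw [hcc, prime_colon_singleton hprime hnotmem]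
      refine ⟨(l - u) :: L', ⟨?_, ?_⟩, ?_, ?_⟩
      · rw [hhead]; exact hprime
      · rw [← hkey]; exact ihS
      · rw [runF_cons, ← hkey]; exact ihr
      · rw [facsF_cons, facsF_cons, ← hkey, hhead]
        exact List.Sublist.cons₂ _ ihsub

end MapConv


section MainAux
variable {K : Type*} [Field K] {σ : Type*}

lemma mono_mem_span_X {i : σ} {m : σ →₀ ℕ}
    (h : mono K m ∈ Ideal.span {(X i : MvPolynomial σ K)}) : m i ≠ 0 := by
  rw [← mono_single_one (K := K) i,
    ← Set.image_singleton (f := fun a => mono K a)] at h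
  obtain ⟨a', ha', hle⟩ := mono_mem_span_iff.1 h
  rw [Set.mem_singleton_iff] at ha'
  subst ha'
  have h2 := Finsupp.le_def.1 hle i
  simp [Finsupp.single_apply] at h2
  omega

lemma X_mem_span_X_iff {i j : σ} 
    (h : (X j : MvPolynomial σ K) ∈ Ideal.span {(X i : MvPolynomial σ K)}) : i = j := by
  rw [← mono_single_one (K := K) j] at h
  classical
  have h2 := mono_mem_span_X h
  rw [Finsupp.single_apply] at h2
  by_contra hne
  rw [if_neg (fun hji => hne hji.symm)] at h2
  omega

lemma exists_X_mem_of_mono_mem {P : Ideal (MvPolynomial σ K)} (hP : P.IsPrime)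
    {m : σ →₀ ℕ} (hm : mono K m ∈ P) : ∃ i, m i ≠ 0 ∧ X i ∈ P := by
  classical
  rw [mono, monomial_eq, map_one, one_mul, Finsupp.prod] at hm
  obtain ⟨i, hi, hXi⟩ := (Ideal.IsPrime.prod_mem_iff (hp := hP)).1 hm
  have hne : m i ≠ 0 := Finsupp.mem_support_iff.1 hi
  exact ⟨i, hne, (hP.pow_mem_iff_mem _ (Nat.pos_of_ne_zero hne)).1 hXi⟩

lemma isPrettyClean_mul {J : Ideal (MvPolynomial (Fin 3) K)} (a : Fin 3 →₀ ℕ)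
    (hcross : ∀ i : Fin 3, ¬ J ≤ Ideal.span {(X i : MvPolynomial (Fin 3) K)})
    (hJ : IsPrettyClean J) : IsPrettyClean (Ideal.span {mono K a} * J) := by
  obtain ⟨L, hS, hr, hp⟩ := isPrettyClean_iff_list.1 hJ
  obtain ⟨pS, pr, pf⟩ := peel3_spec (K := K) (a 0) (a 1) (a 2)
  rw [fs3_eq] at pS pr pf
  have hrun1 : runF (Ideal.span {mono K a} * J) (L.map (a + ·))
      = Ideal.span {mono K a} := by
    rw [runF_map_add, hr, Ideal.mul_top]
  refine isPrettyClean_iff_list.2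
    ⟨L.map (a + ·) ++ peel3 (a 0) (a 1) (a 2), ?_, ?_, ?_⟩
  · exact stepsF_append (stepsF_map_add hS) (by rw [hrun1]; exact pS)
  · rw [runF_append, hrun1]; exact pr
  · rw [facsF_append, hrun1, facsF_map_add, List.pairwise_append]
    refine ⟨hp, ?_, ?_⟩
    · refine List.pairwise_of_forall_mem_list ?_
      intro P hP Q hQ hle
      obtain ⟨i, rfl⟩ := pf P hP
      obtain ⟨j, rfl⟩ := pf Q hQ
      rw [X_mem_span_X_iff (K := K) (hle (Ideal.subset_span rfl))]
    · intro P hPmem Q hQmem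
      obtain ⟨i, rfl⟩ := pf Q hQmem
      intro hle
      exact absurd ((le_facsF P hPmem).trans hle) (hcross i)

lemma isPrettyClean_colon_of_span {A : Set (σ →₀ ℕ)} {I : Ideal (MvPolynomial σ K)}
    (hA : I = Ideal.span ((fun a => mono K a) '' A)) (u : σ →₀ ℕ)
    (hI : IsPrettyClean I) : IsPrettyClean (I.colon (Ideal.span {mono K u})) := by
  obtain ⟨L, hS, hr, hp⟩ := isPrettyClean_iff_list.1 hI
  obtain ⟨L', hS', hr', hsub⟩ := conv u L I A hA hS hr
  exact isPrettyClean_iff_list.2 ⟨L', hS', hr', hp.sublist hsub⟩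

end MainAux


theorem height_one_eq_monomial_mul_and_prettyClean_iff
    {K : Type*} [Field K] (I : Ideal (MvPolynomial (Fin 3) K))
    (hI : IsMonomialIdeal I) (h : idealHeight I = 1) :
    ∃ (a : Fin 3 →₀ ℕ) (J : Ideal (MvPolynomial (Fin 3) K)),
      IsMonomialIdeal J ∧ (2 : ℕ∞) ≤ idealHeight J ∧
      I = Ideal.span {mono K a} * J ∧
      (IsPrettyClean I ↔ IsPrettyClean J) := by
  classical
  obtain ⟨A, hA⟩ := hI
  -- A is nonempty, else I = ⊥ has height 0
  have hAne : A.Nonempty := by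
    by_contra hne
    rw [Set.not_nonempty_iff_eq_empty] at hne
    subst hne
    rw [Set.image_empty, Ideal.span_empty] at hA
    have hbot : (⊥ : Ideal (MvPolynomial (Fin 3) K)) ∈
        (⊥ : Ideal (MvPolynomial (Fin 3) K)).minimalPrimes :=
      ⟨⟨Ideal.bot_prime, le_rfl⟩, fun y _ _ => bot_le⟩
    have h0 : idealHeight (⊥ : Ideal (MvPolynomial (Fin 3) K)) ≤ 0 := by
      have hle := iInf_le (fun P : {P : Ideal (MvPolynomial (Fin 3) K) //
          P ∈ (⊥ : Ideal (MvPolynomial (Fin 3) K)).minimalPrimes} =>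
          Order.height (⟨P.1, P.2.1.1⟩ : PrimeSpectrum (MvPolynomial (Fin 3) K)))
          ⟨⊥, hbot⟩
      have hz : Order.height (⟨⊥, Ideal.bot_prime⟩ :
          PrimeSpectrum (MvPolynomial (Fin 3) K)) = 0 := by
        rw [Order.height_eq_zero]
        intro y _
        show (⟨⊥, Ideal.bot_prime⟩ : PrimeSpectrum _).asIdeal ≤ y.asIdeal
        exact bot_le
      rw [idealHeight]
      exact hle.trans (le_of_eq hz)
    rw [← hA, h] at h0
    simp at h0
  -- the minimal exponent a
  set a : Fin 3 →₀ ℕ :=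
    Finsupp.equivFunOnFinite.symm (fun i => sInf ((fun b => b i) '' A)) with ha_def
  have ha_apply : ∀ i, a i = sInf ((fun b => b i) '' A) := fun i => rfl
  have ha_le : ∀ b ∈ A, a ≤ b := by
    intro b hb
    rw [Finsupp.le_def]
    intro i
    rw [ha_apply]
    exact Nat.sInf_le ⟨b, hb, rfl⟩
  have hattain : ∀ i, ∃ b ∈ A, b i = a i := by
    intro i
    obtain ⟨b, hb, hbi⟩ := Nat.sInf_mem (hAne.image (fun b => b i))
    refine ⟨b, hb, ?_⟩
    rw [ha_apply]
    exact hbi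
  set A' : Set (Fin 3 →₀ ℕ) := (fun b => b - a) '' A with hA'_def
  set J : Ideal (MvPolynomial (Fin 3) K) :=
    Ideal.span ((fun x => mono K x) '' A') with hJ_def
  -- generators of J with vanishing i-th exponent
  have hgen : ∀ i : Fin 3, ∃ m ∈ A', m i = 0 := by
    intro i
    obtain ⟨b, hb, hbi⟩ := hattain i
    refine ⟨b - a, ⟨b, hb, rfl⟩, ?_⟩
    rw [Finsupp.tsub_apply, hbi]
    omega
  -- I = (x^a) * J
  have hIJ : I = Ideal.span {mono K a} * J := by
    have hset : ({mono K a} : Set (MvPolynomial (Fin 3) K)) * ((fun x => mono K x) '' A')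
        = (fun x => mono K x) '' A := by
      rw [hA'_def, Set.singleton_mul, ← Set.image_comp, ← Set.image_comp]
      exact Set.image_congr fun b hb => by
        show mono K a * mono K (b - a) = mono K b
        rw [mono_mul, add_tsub_cancel_of_le (ha_le b hb)]
    rw [hJ_def, Ideal.span_mul_span', hset, ← hA]
  have hcolon : I.colon (Ideal.span {mono K a}) = J := by
    rw [hA, colon_span_mono]
  -- J is not contained in any (X i)
  have hcross : ∀ i : Fin 3, ¬ J ≤ Ideal.span {(X i : MvPolynomial (Fin 3) K)} := by
    intro i hle
    obtain ⟨m, hm, hmi⟩ := hgen i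
    have : mono K m ∈ Ideal.span {(X i : MvPolynomial (Fin 3) K)} :=
      hle (Ideal.subset_span ⟨m, hm, rfl⟩)
    exact mono_mem_span_X this hmi
  refine ⟨a, J, ⟨A', rfl⟩, ?_, hIJ, ?_, ?_⟩
  · -- height ≥ 2
    rw [idealHeight]
    refine le_iInf ?_
    rintro ⟨P, hP⟩
    have hPp : P.IsPrime := hP.1.1
    have hJP : J ≤ P := hP.1.2
    have hvar : ∀ k : Fin 3, ∃ i : Fin 3, i ≠ k ∧ X i ∈ P := by
      intro k
      obtain ⟨m, hm, hmk⟩ := hgen k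
      have hmem : mono K m ∈ P := hJP (Ideal.subset_span ⟨m, hm, rfl⟩)
      obtain ⟨i, hi0, hXi⟩ := exists_X_mem_of_mono_mem hPp hmem
      refine ⟨i, ?_, hXi⟩
      rintro rfl
      exact hi0 hmk
    obtain ⟨i0, _, hX0⟩ := hvar 0
    obtain ⟨i1, hne, hX1⟩ := hvar i0
    set Q0 : PrimeSpectrum (MvPolynomial (Fin 3) K) := ⟨⊥, Ideal.bot_prime⟩ with hQ0
    set Q1 : PrimeSpectrum (MvPolynomial (Fin 3) K) :=
      ⟨Ideal.span {X i0}, span_X_isPrime i0⟩ with hQ1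
    set Q2 : PrimeSpectrum (MvPolynomial (Fin 3) K) := ⟨P, hPp⟩ with hQ2
    have lt01 : Q0 < Q1 := by
      rw [← PrimeSpectrum.asIdeal_lt_asIdeal]
      show (⊥ : Ideal (MvPolynomial (Fin 3) K)) < Ideal.span {X i0}
      rw [bot_lt_iff_ne_bot, Ne, Ideal.span_singleton_eq_bot]
      exact MvPolynomial.X_ne_zero i0
    have lt12 : Q1 < Q2 := by
      rw [← PrimeSpectrum.asIdeal_lt_asIdeal]
      refine lt_of_le_of_ne ((Ideal.span_singleton_le_iff_mem _).2 hX0) ?_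
      intro heq
      have heq' : Ideal.span {(X i0 : MvPolynomial (Fin 3) K)} = P := heq
      rw [← heq'] at hX1
      exact hne (X_mem_span_X_iff hX1).symm
    let pser : LTSeries (PrimeSpectrum (MvPolynomial (Fin 3) K)) :=
      ⟨2, ![Q0, Q1, Q2], by
        intro i
        fin_cases i
        · exact lt01
        · exact lt12⟩
    have hlast : pser.last = Q2 := rfl
    have hh := Order.length_le_height (x := Q2) (p := pser) (le_of_eq hlast)
    exact hh
  · -- pretty clean iff, forward
    intro hIpc
    rw [← hcolon]
    exact isPrettyClean_colon_of_span hA a hIpc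
  · -- backward
    intro hJpc
    rw [hIJ]
    exact isPrettyClean_mul a hcross hJpc
end

section
/- Every monomial ideal in a polynomial ring in at most three variables over a field is pretty clean. -/
open MvPolynomial

namespace PC

variable {K : Type*} [Field K] {n : ℕ}

/-- The monomial ideal attached to a set of exponent vectors. -/
noncomputable def MI (K : Type*) [Field K] {n : ℕ} (U : Set (Fin n →₀ ℕ)) :
    Ideal (MvPolynomial (Fin n) K) :=
  Ideal.span ((fun a => mono K a) '' U)

/-- Upward closed set of exponents. -/
def Up {n : ℕ} (U : Set (Fin n →₀ ℕ)) : Prop :=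
  ∀ ⦃a b : Fin n →₀ ℕ⦄, a ∈ U → a ≤ b → b ∈ U

theorem mem_MI {U : Set (Fin n →₀ ℕ)} {f : MvPolynomial (Fin n) K} :
    f ∈ MI K U ↔ ∀ d ∈ f.support, ∃ u ∈ U, u ≤ d := by
  simpa [MI, mono] using
    (mem_ideal_span_monomial_image (x := f) (s := U) (R := K))

theorem mem_MI_up {U : Set (Fin n →₀ ℕ)} (hU : Up U) {f : MvPolynomial (Fin n) K} :
    f ∈ MI K U ↔ ∀ d ∈ f.support, d ∈ U := by
  rw [mem_MI]
  exact forall₂_congr fun d _ => ⟨fun ⟨u, hu, hle⟩ => hU hu hle, fun h => ⟨d, h, le_rfl⟩⟩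

theorem mono_mem {U : Set (Fin n →₀ ℕ)} (hU : Up U) {a : Fin n →₀ ℕ} :
    mono K a ∈ MI K U ↔ a ∈ U := by
  rw [mem_MI_up hU]
  constructor
  · intro h
    exact h a (by simp [mono, support_monomial])
  · intro h d hd
    simp [mono, support_monomial] at hd
    rwa [← hd]

theorem mono_mul (a b : Fin n →₀ ℕ) : mono K a * mono K b = mono K (a + b) := by
  simp [mono, monomial_mul]

theorem MI_sup (U : Set (Fin n →₀ ℕ)) (p : Fin n →₀ ℕ) :
    MI K U ⊔ Ideal.span {mono K p} = MI K (U ∪ {q | p ≤ q}) := by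
  apply le_antisymm
  · apply sup_le
    · exact Ideal.span_mono (Set.image_mono Set.subset_union_left)
    · rw [Ideal.span_le, Set.singleton_subset_iff]
      exact Ideal.subset_span ⟨p, Or.inr (by simp : p ∈ {q | p ≤ q}), rfl⟩
  · rw [MI, Ideal.span_le]
    rintro _ ⟨q, hq | hq, rfl⟩
    · exact Ideal.mem_sup_left (Ideal.subset_span ⟨q, hq, rfl⟩)
    · obtain ⟨w, rfl⟩ := le_iff_exists_add.mp (show p ≤ q from hq)
      apply Ideal.mem_sup_right
      show mono K (p + w) ∈ _
      rw [← mono_mul]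
      exact Ideal.mul_mem_right _ _ (Ideal.subset_span rfl)

theorem colon_MI {U : Set (Fin n →₀ ℕ)} (hU : Up U) (p : Fin n →₀ ℕ) :
    (MI K U).colon (Ideal.span {mono K p}) = MI K {w | p + w ∈ U} := by
  ext f
  rw [Ideal.mem_colon_span_singleton, mem_MI_up hU, mem_MI]
  constructor
  · intro h d hd
    refine ⟨d, ?_, le_rfl⟩
    have : p + d ∈ (f * mono K p).support := by
      rw [MvPolynomial.mem_support_iff]
      have : coeff (p + d) (f * mono K p) = coeff d f := by
        rw [mono, coeff_mul_monomial' (p + d) p 1 f]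
        simp [add_tsub_cancel_left, add_comm]
      rw [this]
      exact MvPolynomial.mem_support_iff.mp hd
    exact h _ this
  · intro h e he
    rw [MvPolynomial.mem_support_iff, mono, coeff_mul_monomial' e p 1 f] at he
    by_cases hle : p ≤ e
    · simp only [hle, if_true, mul_one] at he
      have hd : e - p ∈ f.support := MvPolynomial.mem_support_iff.mpr he
      obtain ⟨u, hu, hule⟩ := h _ hd
      refine hU hu ?_
      calc p + u ≤ p + (e - p) := add_le_add_right hule p
        _ = e := by rw [add_tsub_cancel_of_le hle]
    · simp [hle] at he

theorem MI_eq_top {U : Set (Fin n →₀ ℕ)} (h0 : (0 : Fin n →₀ ℕ) ∈ U) :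
    MI K U = ⊤ := by
  rw [Ideal.eq_top_iff_one]
  have : mono K (0 : Fin n →₀ ℕ) = 1 := by simp [mono]
  rw [← this]
  exact Ideal.subset_span ⟨0, h0, rfl⟩


/-- The set of exponents of the monomial prime attached to `T`. -/
def PU {n : ℕ} (T : Finset (Fin n)) : Set (Fin n →₀ ℕ) := {d | ∃ i ∈ T, d i ≠ 0}

/-- The monomial prime ideal attached to `T`. -/
noncomputable def P (K : Type*) [Field K] {n : ℕ} (T : Finset (Fin n)) :
    Ideal (MvPolynomial (Fin n) K) := MI K (PU T)

theorem P_isPrime (T : Finset (Fin n)) : (P K T).IsPrime := by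
  classical
  set φ : MvPolynomial (Fin n) K →ₐ[K] MvPolynomial (Fin n) K :=
    aeval (fun i => if i ∈ T then 0 else X i) with hφ
  have hφmon : ∀ (e : Fin n →₀ ℕ) (c : K),
      φ (monomial e c) = if ∀ i ∈ T, e i = 0 then monomial e c else 0 := by
    intro e c
    rw [hφ, aeval_monomial]
    by_cases hfree : ∀ i ∈ T, e i = 0
    · rw [if_pos hfree]
      have : (e.prod fun i k => (if i ∈ T then (0:MvPolynomial (Fin n) K) else X i) ^ k)
          = e.prod fun i k => (X i) ^ k := by
        apply Finsupp.prod_congr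
        intro i hi
        have : i ∉ T := fun hiT => (Finsupp.mem_support_iff.mp hi) (hfree i hiT)
        rw [if_neg this]
      rw [this, MvPolynomial.algebraMap_eq, ← monomial_eq]
    · rw [if_neg hfree]
      push_neg at hfree
      obtain ⟨i, hiT, hie⟩ := hfree
      have hi : i ∈ e.support := Finsupp.mem_support_iff.mpr hie
      rw [Finsupp.prod]
      rw [Finset.prod_eq_zero hi (by rw [if_pos hiT]; exact zero_pow hie)]
      rw [mul_zero]
  have hker : RingHom.ker φ.toRingHom = P K T := by
    ext f
    simp only [RingHom.mem_ker, AlgHom.toRingHom_eq_coe, RingHom.coe_coe]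
    constructor
    · intro hf
      rw [P, PU, mem_MI]
      intro d hd
      refine ⟨d, ?_, le_rfl⟩
      by_contra hfree
      simp only [Set.mem_setOf_eq, not_exists, not_and, not_not] at hfree
      have hfree' : ∀ i ∈ T, d i = 0 := fun i hi => by
        by_contra h; exact h (by exact hfree i hi ▸ rfl)
      apply MvPolynomial.mem_support_iff.mp hd
      have h1 : coeff d (φ f) = coeff d f := by
        conv_lhs => rw [f.as_sum, map_sum]
        rw [MvPolynomial.coeff_sum]
        rw [Finset.sum_eq_single d]
        · rw [hφmon d (coeff d f), if_pos hfree', coeff_monomial, if_pos rfl]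
        · intro e he hne
          rw [hφmon]
          by_cases h : ∀ i ∈ T, e i = 0
          · rw [if_pos h, coeff_monomial, if_neg hne]
          · rw [if_neg h, coeff_zero]
        · intro h
          rw [hφmon, if_pos hfree', coeff_monomial, if_pos rfl,
            MvPolynomial.notMem_support_iff.mp h]
      rw [← h1, hf, coeff_zero]
    · intro hf
      rw [P, MI] at hf
      have hle : Ideal.span ((fun a => mono K a) '' PU T) ≤ RingHom.ker φ.toRingHom := by
        rw [Ideal.span_le]
        rintro _ ⟨e, he, rfl⟩
        obtain ⟨i, hiT, hie⟩ := he
        simp only [SetLike.mem_coe, RingHom.mem_ker, AlgHom.toRingHom_eq_coe, RingHom.coe_coe]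
        show φ (mono K e) = 0
        rw [mono, hφmon, if_neg]
        push_neg
        exact ⟨i, hiT, hie⟩
      simpa using hle hf
  rw [← hker]
  exact RingHom.ker_isPrime φ.toRingHom

theorem P_le_P {T T' : Finset (Fin n)} (h : P K T ≤ P K T') : T ⊆ T' := by
  intro i hi
  have h1 : mono K (Finsupp.single i 1) ∈ P K T :=
    Ideal.subset_span ⟨_, ⟨i, hi, by simp⟩, rfl⟩
  have h2 := h h1
  rw [P, mem_MI] at h2
  have hd : (Finsupp.single i 1) ∈ (mono K (Finsupp.single i 1)).support := by
    simp [mono, support_monomial]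
  obtain ⟨u, ⟨j, hj, hju⟩, hle⟩ := h2 _ hd
  have hj2 := hle j
  rw [Finsupp.single_apply] at hj2
  by_cases hij : i = j
  · exact hij ▸ hj
  · rw [if_neg hij] at hj2
    exact absurd (Nat.le_zero.mp hj2) hju


/-- An up-closed, "socle-free" subset of `ℕ³`. -/
structure Nice (R : ℕ → ℕ → ℕ → Prop) : Prop where
  up : ∀ {a b c a' b' c' : ℕ}, R a b c → a ≤ a' → b ≤ b' → c ≤ c' → R a' b' c'
  sat : ∀ a b c, R (a+1) b c → R a (b+1) c → R a b (c+1) → R a b c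

theorem Nice.hit {R : ℕ → ℕ → ℕ → Prop} (h : Nice R) :
    ∀ (N a b c k1 k2 k3 : ℕ), k1 + k2 + k3 ≤ N →
      R (a+k1) b c → R a (b+k2) c → R a b (c+k3) → R a b c := by
  intro N
  induction N with
  | zero =>
    intro a b c k1 k2 k3 hN h1 h2 h3
    obtain ⟨rfl, rfl, rfl⟩ : k1 = 0 ∧ k2 = 0 ∧ k3 = 0 := by omega
    simpa using h1
  | succ N ih =>
    intro a b c k1 k2 k3 hN h1 h2 h3
    match k1, k2, k3 with
    | 0, _, _ => simpa using h1
    | _, 0, _ => simpa using h2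
    | _, _, 0 => simpa using h3
    | m1+1, m2+1, m3+1 =>
      apply h.sat
      · exact ih (a+1) b c m1 (m2+1) (m3+1) (by omega)
          (by have : a + 1 + m1 = a + (m1+1) := by omega
              rw [this]; exact h1)
          (h.up h2 (by omega) le_rfl le_rfl) (h.up h3 (by omega) le_rfl le_rfl)
      · exact ih a (b+1) c (m1+1) m2 (m3+1) (by omega)
          (h.up h1 le_rfl (by omega) le_rfl)
          (by have : b + 1 + m2 = b + (m2+1) := by omega
              rw [this]; exact h2)
          (h.up h3 le_rfl (by omega) le_rfl)
      · exact ih a b (c+1) (m1+1) (m2+1) m3 (by omega)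
          (h.up h1 le_rfl le_rfl (by omega))
          (h.up h2 le_rfl le_rfl (by omega))
          (by have : c + 1 + m3 = c + (m3+1) := by omega
              rw [this]; exact h3)

theorem Nice.hit' {R : ℕ → ℕ → ℕ → Prop} (h : Nice R) {a b c k1 k2 k3 : ℕ}
    (h1 : R (a+k1) b c) (h2 : R a (b+k2) c) (h3 : R a b (c+k3)) : R a b c :=
  h.hit (k1+k2+k3) a b c k1 k2 k3 le_rfl h1 h2 h3

/-- If a point is not in `R` then one of its three coordinate rays misses `R`
entirely. -/
theorem Nice.ray {R : ℕ → ℕ → ℕ → Prop} (h : Nice R) {a b c : ℕ} (hn : ¬ R a b c) :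
    (∀ s, ¬ R s b c) ∨ (∀ t, ¬ R a t c) ∨ (∀ w, ¬ R a b w) := by
  by_contra hc
  push_neg at hc
  obtain ⟨⟨s, hs⟩, ⟨t, ht⟩, ⟨w, hw⟩⟩ := hc
  exact hn (h.hit' (k1 := s) (k2 := t) (k3 := w)
    (h.up hs (by omega) le_rfl le_rfl) (h.up ht le_rfl (by omega) le_rfl)
    (h.up hw le_rfl le_rfl (by omega)))

/-- The main combinatorial step: given a saturated up-set in `ℕ³` with a full
empty line in the first coordinate direction, and touching all three
coordinate planes, there is a "ray base" `(s, b, c)` whose colon is exactly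
the prime in the last two variables, and adding its orthant preserves
saturation. -/
theorem main_step {R : ℕ → ℕ → ℕ → Prop} (hN : Nice R)
    (hy0 : ∃ a1 a3, R a1 0 a3)
    (hz0 : ∃ a1 a2, R a1 a2 0)
    (hX : ∃ b c, ∀ s, ¬ R s b c) :
    ∃ s b c,
      (∀ k, ¬ R (s+k) b c) ∧ R s (b+1) c ∧ R s b (c+1) ∧
      Nice (fun x y z => R x y z ∨ (s ≤ x ∧ b ≤ y ∧ c ≤ z)) := by
  classical
  obtain ⟨α', γ', hy⟩ := hy0
  obtain ⟨α'', β'', hz⟩ := hz0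
  -- any full x-line has bounded coordinates
  have hbound : ∀ b c, (∀ s, ¬ R s b c) → b + c ≤ β'' + γ' := by
    intro b c hbc
    by_contra hgt
    rcases le_or_gt β'' b with hb | hb
    · rcases le_or_gt γ' c with hcc | hcc
      · exact hbc α'' (hN.up hz le_rfl hb (by omega))
      · -- c < γ', so b > β'' + γ' - c ≥ β''
        exact hbc α'' (hN.up hz le_rfl hb (by omega))
    · -- b < β'', so c > γ'
      exact hbc α' (hN.up hy le_rfl (by omega) (by omega))
  -- pick a full x-line with maximal coordinate sum
  set B := β'' + γ' with hB
  haveI : DecidablePred (fun m => ∃ b c, b + c = m ∧ ∀ s, ¬ R s b c) := Classical.decPred _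
  have hex : ∃ m, m ≤ B ∧ ∃ b c, b + c = m ∧ ∀ s, ¬ R s b c := by
    obtain ⟨b0, c0, h0⟩ := hX
    exact ⟨b0 + c0, hbound b0 c0 h0, b0, c0, rfl, h0⟩
  have hP : ∃ b c, b + c = Nat.findGreatest (fun m => ∃ b c, b + c = m ∧ ∀ s, ¬ R s b c) B
      ∧ ∀ s, ¬ R s b c := by
    obtain ⟨m, hm, hmp⟩ := hex
    exact Nat.findGreatest_spec (P := fun m => ∃ b c, b + c = m ∧ ∀ s, ¬ R s b c) hm hmp
  obtain ⟨b, c, hsum, hXbc⟩ := hP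
  have hmax : ∀ b' c', (∀ s, ¬ R s b' c') → b' + c' ≤ b + c := by
    intro b' c' h'
    rw [hsum]
    exact Nat.le_findGreatest (hbound b' c' h') ⟨b', c', rfl, h'⟩
  -- least `s` such that the z-column at `(s, b)` meets `R`
  have hgzE : ∃ s, ∃ w, R s b w := ⟨α', γ', hN.up hy le_rfl (Nat.zero_le b) le_rfl⟩
  haveI : DecidablePred (fun s => ∃ w, R s b w) := Classical.decPred _
  set gz := Nat.find hgzE with hgzdef
  obtain ⟨wz, hwz⟩ : ∃ w, R gz b w := Nat.find_spec hgzE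
  have hgzmin : ∀ s, s < gz → ∀ w, ¬ R s b w := by
    intro s hs w hw
    exact Nat.find_min hgzE hs ⟨w, hw⟩
  -- least `s` such that the y-line at `(s, ⬝, c)` meets `R`
  have hgyE : ∃ s, ∃ t, R s t c := ⟨α'', β'', hN.up hz le_rfl le_rfl (Nat.zero_le c)⟩
  haveI : DecidablePred (fun s => ∃ t, R s t c) := Classical.decPred _
  set gy := Nat.find hgyE with hgydef
  obtain ⟨ty, hty⟩ : ∃ t, R gy t c := Nat.find_spec hgyE
  have hgymin : ∀ s, s < gy → ∀ t, ¬ R s t c := by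
    intro s hs t ht
    exact Nat.find_min hgyE hs ⟨t, ht⟩
  set s := max gz gy with hs
  refine ⟨s, b, c, fun k => hXbc (s + k), ?_, ?_, ?_⟩
  · -- R s (b+1) c
    by_contra hnot
    rcases hN.ray hnot with h1 | h2 | h3
    · exact absurd (hmax _ _ h1) (by omega)
    · exact h2 ty (hN.up hty (le_max_right _ _) le_rfl le_rfl)
    · exact h3 wz (hN.up hwz (le_max_left _ _) (by omega) le_rfl)
  · -- R s b (c+1)
    by_contra hnot
    rcases hN.ray hnot with h1 | h2 | h3
    · exact absurd (hmax _ _ h1) (by omega)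
    · exact h2 ty (hN.up hty (le_max_right _ _) le_rfl (by omega))
    · exact h3 wz (hN.up hwz (le_max_left _ _) le_rfl le_rfl)
  · -- saturation of the enlarged set
    constructor
    · rintro a1 a2 a3 a1' a2' a3' (hr | hup) h1 h2 h3
      · exact Or.inl (hN.up hr h1 h2 h3)
      · exact Or.inr ⟨by omega, by omega, by omega⟩
    · rintro v1 v2 v3 (h1 | h1) (h2 | h2) (h3 | h3)
      -- all three neighbours in R : use saturation of R
      · exact Or.inl (hN.sat _ _ _ h1 h2 h3)
      -- exactly the z-neighbour is covered by the new orthant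
      · by_cases hv : R v1 v2 v3
        · exact Or.inl hv
        · -- v3 + 1 = c is forced, v1 ≥ s, v2 ≥ b
          rcases Nat.lt_or_ge v3 c with hcv | hcv
          · -- v3 < c, so c = v3 + 1
            -- the z-column at (v1, v2) misses R
            have hcol : ∀ w, ¬ R v1 v2 w := by
              intro w hw
              exact hv (hN.hit' (k1 := 1) (k2 := 1) (k3 := w)
                (hN.up h1 le_rfl le_rfl le_rfl) (hN.up h2 le_rfl le_rfl le_rfl)
                (hN.up hw le_rfl le_rfl (by omega)))
            -- but gz ≤ s ≤ v1 and b ≤ v2 give a point in that column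
            exact absurd (hN.up hwz (by omega) (by omega) le_rfl) (hcol wz)
          · exact Or.inr ⟨by omega, by omega, by omega⟩
      -- exactly the y-neighbour is covered
      · by_cases hv : R v1 v2 v3
        · exact Or.inl hv
        · rcases Nat.lt_or_ge v2 b with hbv | hbv
          · have hrow : ∀ t, ¬ R v1 t v3 := by
              intro t ht
              exact hv (hN.hit' (k1 := 1) (k2 := t) (k3 := 1)
                (hN.up h1 le_rfl le_rfl le_rfl) (hN.up ht le_rfl (by omega) le_rfl)
                (hN.up h3 le_rfl le_rfl le_rfl))
            exact absurd (hN.up hty (by omega) le_rfl (by omega)) (hrow ty)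
          · exact Or.inr ⟨by omega, by omega, by omega⟩
      · -- y- and z-neighbours both covered: then the point itself is covered
        exact Or.inr ⟨by omega, by omega, by omega⟩
      -- exactly the x-neighbour is covered
      · by_cases hv : R v1 v2 v3
        · exact Or.inl hv
        · rcases Nat.lt_or_ge v1 s with hsv | hsv
          · -- v1 + 1 = s; the x-line through v misses R
            have hline : ∀ u, ¬ R u v2 v3 := by
              intro u hu
              exact hv (hN.hit' (k1 := u) (k2 := 1) (k3 := 1)
                (hN.up hu (by omega) le_rfl le_rfl) (hN.up h2 le_rfl le_rfl le_rfl)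
                (hN.up h3 le_rfl le_rfl le_rfl))
            -- so (v2, v3) is a full x-line with v2 ≥ b, v3 ≥ c hence equal
            have hsum2 := hmax v2 v3 hline
            have hv2 : v2 = b := by omega
            have hv3 : v3 = c := by omega
            subst hv2; subst hv3
            -- v1 + 1 = s = max gz gy
            rcases Nat.lt_or_ge v1 gz with h | h
            · exact absurd h3 (hgzmin v1 h _)
            · have : v1 < gy := by omega
              exact absurd h2 (hgymin v1 this _)
          · exact Or.inr ⟨by omega, by omega, by omega⟩
      · exact Or.inr ⟨by omega, by omega, by omega⟩
      · exact Or.inr ⟨by omega, by omega, by omega⟩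
      · exact Or.inr ⟨by omega, by omega, by omega⟩


/-- A set of exponents is saturated if it contains every point all of whose
coordinate neighbours it contains. -/
def SatF {n : ℕ} (V : Set (Fin n →₀ ℕ)) : Prop :=
  ∀ q, (∀ i, q + Finsupp.single i 1 ∈ V) → q ∈ V

/-- The triple `(a, b, c)` as an element of `Fin 3 →₀ ℕ`. -/
noncomputable def t3 (a b c : ℕ) : Fin 3 →₀ ℕ :=
  Finsupp.single 0 a + Finsupp.single 1 b + Finsupp.single 2 c

@[simp] theorem t3_apply0 (a b c : ℕ) : t3 a b c 0 = a := by
  simp [t3, Finsupp.single_apply]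

@[simp] theorem t3_apply1 (a b c : ℕ) : t3 a b c 1 = b := by
  simp [t3, Finsupp.single_apply]

@[simp] theorem t3_apply2 (a b c : ℕ) : t3 a b c 2 = c := by
  simp [t3, Finsupp.single_apply]

theorem t3_eta (q : Fin 3 →₀ ℕ) : t3 (q 0) (q 1) (q 2) = q := by
  ext i
  fin_cases i <;> simp

theorem t3_add (a b c d e f : ℕ) : t3 a b c + t3 d e f = t3 (a+d) (b+e) (c+f) := by
  ext i
  fin_cases i <;> simp

theorem le3 {x y : Fin 3 →₀ ℕ} : x ≤ y ↔ x 0 ≤ y 0 ∧ x 1 ≤ y 1 ∧ x 2 ≤ y 2 := by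
  constructor
  · intro h
    exact ⟨h 0, h 1, h 2⟩
  · rintro ⟨h0, h1, h2⟩ i
    fin_cases i <;> assumption

theorem sF0 : Finsupp.single (0 : Fin 3) (1:ℕ) = t3 1 0 0 := by ext i; fin_cases i <;> simp
theorem sF1 : Finsupp.single (1 : Fin 3) (1:ℕ) = t3 0 1 0 := by ext i; fin_cases i <;> simp
theorem sF2 : Finsupp.single (2 : Fin 3) (1:ℕ) = t3 0 0 1 := by ext i; fin_cases i <;> simp

/-- Output of a single middle-block step. -/
def StepOut (U : Set (Fin 3 →₀ ℕ)) : Prop :=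
  ∃ (p : Fin 3 →₀ ℕ) (T : Finset (Fin 3)), T.card = 2 ∧
    (∀ w : Fin 3 →₀ ℕ, (p + w ∈ U) ↔ ∃ i ∈ T, w i ≠ 0) ∧
    SatF (U ∪ {q | p ≤ q})

section dirs
variable {U : Set (Fin 3 →₀ ℕ)}

theorem niceX (hU : Up U) (hS : SatF U) : Nice (fun a b c => t3 a b c ∈ U) := by
  constructor
  · intro a b c a' b' c' h ha hb hc
    exact hU h (le3.mpr (by simp [ha, hb, hc]))
  · intro a b c hx hy hz
    apply hS (t3 a b c)
    intro i
    fin_cases i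
    · show t3 a b c + Finsupp.single 0 1 ∈ U
      rw [sF0, t3_add]; exact hx
    · show t3 a b c + Finsupp.single 1 1 ∈ U
      rw [sF1, t3_add]; exact hy
    · show t3 a b c + Finsupp.single 2 1 ∈ U
      rw [sF2, t3_add]; exact hz

theorem niceY (hU : Up U) (hS : SatF U) : Nice (fun a b c => t3 b a c ∈ U) := by
  constructor
  · intro a b c a' b' c' h ha hb hc
    exact hU h (le3.mpr (by simp [ha, hb, hc]))
  · intro a b c hx hy hz
    apply hS (t3 b a c)
    intro i
    fin_cases i
    · show t3 b a c + Finsupp.single 0 1 ∈ U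
      rw [sF0, t3_add]; exact hy
    · show t3 b a c + Finsupp.single 1 1 ∈ U
      rw [sF1, t3_add]; exact hx
    · show t3 b a c + Finsupp.single 2 1 ∈ U
      rw [sF2, t3_add]; exact hz

theorem niceZ (hU : Up U) (hS : SatF U) : Nice (fun a b c => t3 b c a ∈ U) := by
  constructor
  · intro a b c a' b' c' h ha hb hc
    exact hU h (le3.mpr (by simp [ha, hb, hc]))
  · intro a b c hx hy hz
    apply hS (t3 b c a)
    intro i
    fin_cases i
    · show t3 b c a + Finsupp.single 0 1 ∈ U
      rw [sF0, t3_add]; exact hy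
    · show t3 b c a + Finsupp.single 1 1 ∈ U
      rw [sF1, t3_add]; exact hz
    · show t3 b c a + Finsupp.single 2 1 ∈ U
      rw [sF2, t3_add]; exact hx

/-- Direction `x`. -/
theorem stepOutX (hU : Up U) (hS : SatF U)
    (h1 : ∃ w ∈ U, w 1 = 0) (h2 : ∃ w ∈ U, w 2 = 0)
    (hline : ∃ b c, ∀ k, t3 k b c ∉ U) : StepOut U := by
  set R : ℕ → ℕ → ℕ → Prop := fun a b c => t3 a b c ∈ U with hR
  have hNice : Nice R := niceX hU hS
  have hy0 : ∃ a1 a3, R a1 0 a3 := by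
    obtain ⟨w, hw, hw1⟩ := h1
    refine ⟨w 0, w 2, ?_⟩
    show t3 (w 0) 0 (w 2) ∈ U
    rwa [← hw1, t3_eta]
  have hz0 : ∃ a1 a2, R a1 a2 0 := by
    obtain ⟨w, hw, hw2⟩ := h2
    refine ⟨w 0, w 1, ?_⟩
    show t3 (w 0) (w 1) 0 ∈ U
    rwa [← hw2, t3_eta]
  obtain ⟨s, b, c, hray, hyb, hzc, hQ⟩ := main_step hNice hy0 hz0 (by
    obtain ⟨b, c, h⟩ := hline
    exact ⟨b, c, fun k => h k⟩)
  refine ⟨t3 s b c, {1, 2}, by decide, ?_, ?_⟩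
  · intro w
    have hw : t3 s b c + w = t3 (s + w 0) (b + w 1) (c + w 2) := by
      conv_lhs => rw [← t3_eta w]
      rw [t3_add]
    rw [hw]
    constructor
    · intro h
      by_contra hno
      push_neg at hno
      have e1 : w 1 = 0 := by
        by_contra h1'
        exact h1' (by simpa using hno 1 (by simp))
      have e2 : w 2 = 0 := by
        by_contra h2'
        exact h2' (by simpa using hno 2 (by simp))
      rw [e1, e2] at h
      exact hray (w 0) (by simpa using h)
    · rintro ⟨i, hi, hne⟩
      fin_cases hi
      · exact hNice.up hyb (by omega) (by omega) (by omega)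
      · exact hNice.up hzc (by omega) (by omega) (by omega)
  · intro q hq
    have memiff : ∀ x y z : ℕ, (t3 x y z ∈ U ∪ {q | t3 s b c ≤ q}) ↔
        (R x y z ∨ (s ≤ x ∧ b ≤ y ∧ c ≤ z)) := by
      intro x y z
      rw [Set.mem_union]
      apply or_congr Iff.rfl
      rw [Set.mem_setOf_eq, le3]
      simp
    have h0' := hq 0
    rw [sF0, ← t3_eta q, t3_add, memiff] at h0'
    have h1' := hq 1
    rw [sF1, ← t3_eta q, t3_add, memiff] at h1'
    have h2' := hq 2
    rw [sF2, ← t3_eta q, t3_add, memiff] at h2'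
    have := hQ.sat (q 0) (q 1) (q 2) (by simpa using h0') (by simpa using h1')
      (by simpa using h2')
    rw [← t3_eta q]
    exact (memiff _ _ _).mpr this


/-- Direction `y`. -/
theorem stepOutY (hU : Up U) (hS : SatF U)
    (h0 : ∃ w ∈ U, w 0 = 0) (h2 : ∃ w ∈ U, w 2 = 0)
    (hline : ∃ b c, ∀ k, t3 b k c ∉ U) : StepOut U := by
  set R : ℕ → ℕ → ℕ → Prop := fun a b c => t3 b a c ∈ U with hR
  have hNice : Nice R := niceY hU hS
  have hy0 : ∃ a1 a3, R a1 0 a3 := by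
    obtain ⟨w, hw, hw0⟩ := h0
    refine ⟨w 1, w 2, ?_⟩
    show t3 0 (w 1) (w 2) ∈ U
    rwa [← hw0, t3_eta]
  have hz0 : ∃ a1 a2, R a1 a2 0 := by
    obtain ⟨w, hw, hw2⟩ := h2
    refine ⟨w 1, w 0, ?_⟩
    show t3 (w 0) (w 1) 0 ∈ U
    rwa [← hw2, t3_eta]
  obtain ⟨s, b, c, hray, hyb, hzc, hQ⟩ := main_step hNice hy0 hz0 (by
    obtain ⟨b, c, h⟩ := hline
    exact ⟨b, c, fun k => h k⟩)
  refine ⟨t3 b s c, {0, 2}, by decide, ?_, ?_⟩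
  · intro w
    have hw : t3 b s c + w = t3 (b + w 0) (s + w 1) (c + w 2) := by
      conv_lhs => rw [← t3_eta w]
      rw [t3_add]
    rw [hw]
    constructor
    · intro h
      by_contra hno
      push_neg at hno
      have e0 : w 0 = 0 := by
        by_contra h0'
        exact h0' (by simpa using hno 0 (by simp))
      have e2 : w 2 = 0 := by
        by_contra h2'
        exact h2' (by simpa using hno 2 (by simp))
      rw [e0, e2] at h
      exact hray (w 1) (by simpa using h)
    · rintro ⟨i, hi, hne⟩
      fin_cases hi
      · exact hNice.up hyb (by omega) (by omega) (by omega)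
      · exact hNice.up hzc (by omega) (by omega) (by omega)
  · intro q hq
    have memiff : ∀ x y z : ℕ, (t3 y x z ∈ U ∪ {q | t3 b s c ≤ q}) ↔
        (R x y z ∨ (s ≤ x ∧ b ≤ y ∧ c ≤ z)) := by
      intro x y z
      rw [Set.mem_union]
      apply or_congr Iff.rfl
      rw [Set.mem_setOf_eq, le3]
      simp
      tauto
    have h0' := hq 0
    rw [sF0, ← t3_eta q, t3_add, memiff] at h0'
    have h1' := hq 1
    rw [sF1, ← t3_eta q, t3_add, memiff] at h1'
    have h2' := hq 2
    rw [sF2, ← t3_eta q, t3_add, memiff] at h2'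
    have := hQ.sat (q 1) (q 0) (q 2) (by simpa using h1') (by simpa using h0')
      (by simpa using h2')
    rw [← t3_eta q]
    exact (memiff _ _ _).mpr this

/-- Direction `z`. -/
theorem stepOutZ (hU : Up U) (hS : SatF U)
    (h0 : ∃ w ∈ U, w 0 = 0) (h1 : ∃ w ∈ U, w 1 = 0)
    (hline : ∃ b c, ∀ k, t3 b c k ∉ U) : StepOut U := by
  set R : ℕ → ℕ → ℕ → Prop := fun a b c => t3 b c a ∈ U with hR
  have hNice : Nice R := niceZ hU hS
  have hy0 : ∃ a1 a3, R a1 0 a3 := by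
    obtain ⟨w, hw, hw0⟩ := h0
    refine ⟨w 2, w 1, ?_⟩
    show t3 0 (w 1) (w 2) ∈ U
    rwa [← hw0, t3_eta]
  have hz0 : ∃ a1 a2, R a1 a2 0 := by
    obtain ⟨w, hw, hw1⟩ := h1
    refine ⟨w 2, w 0, ?_⟩
    show t3 (w 0) 0 (w 2) ∈ U
    rwa [← hw1, t3_eta]
  obtain ⟨s, b, c, hray, hyb, hzc, hQ⟩ := main_step hNice hy0 hz0 (by
    obtain ⟨b, c, h⟩ := hline
    exact ⟨b, c, fun k => h k⟩)
  refine ⟨t3 b c s, {0, 1}, by decide, ?_, ?_⟩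
  · intro w
    have hw : t3 b c s + w = t3 (b + w 0) (c + w 1) (s + w 2) := by
      conv_lhs => rw [← t3_eta w]
      rw [t3_add]
    rw [hw]
    constructor
    · intro h
      by_contra hno
      push_neg at hno
      have e0 : w 0 = 0 := by
        by_contra h0'
        exact h0' (by simpa using hno 0 (by simp))
      have e1 : w 1 = 0 := by
        by_contra h1'
        exact h1' (by simpa using hno 1 (by simp))
      rw [e0, e1] at h
      exact hray (w 2) (by simpa using h)
    · rintro ⟨i, hi, hne⟩
      fin_cases hi
      · exact hNice.up hyb (by omega) (by omega) (by omega)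
      · exact hNice.up hzc (by omega) (by omega) (by omega)
  · intro q hq
    have memiff : ∀ x y z : ℕ, (t3 y z x ∈ U ∪ {q | t3 b c s ≤ q}) ↔
        (R x y z ∨ (s ≤ x ∧ b ≤ y ∧ c ≤ z)) := by
      intro x y z
      rw [Set.mem_union]
      apply or_congr Iff.rfl
      rw [Set.mem_setOf_eq, le3]
      simp
      tauto
    have h0' := hq 0
    rw [sF0, ← t3_eta q, t3_add, memiff] at h0'
    have h1' := hq 1
    rw [sF1, ← t3_eta q, t3_add, memiff] at h1'
    have h2' := hq 2
    rw [sF2, ← t3_eta q, t3_add, memiff] at h2'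
    have := hQ.sat (q 2) (q 0) (q 1) (by simpa using h2') (by simpa using h0')
      (by simpa using h1')
    rw [← t3_eta q]
    exact (memiff _ _ _).mpr this

theorem t3_zero : t3 0 0 0 = 0 := by ext i; fin_cases i <;> simp

/-- Combined middle step. -/
theorem stepOut (hU : Up U) (hS : SatF U)
    (h0 : ∃ w ∈ U, w 0 = 0) (h1 : ∃ w ∈ U, w 1 = 0) (h2 : ∃ w ∈ U, w 2 = 0)
    (hn0 : (0 : Fin 3 →₀ ℕ) ∉ U) : StepOut U := by
  have hn : ¬ t3 0 0 0 ∈ U := by rwa [t3_zero]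
  rcases (niceX hU hS).ray hn with h | h | h
  · exact stepOutX hU hS h1 h2 ⟨0, 0, h⟩
  · exact stepOutY hU hS h0 h2 ⟨0, 0, h⟩
  · exact stepOutZ hU hS h0 h1 ⟨0, 0, h⟩

end dirs

/-- A "good filtration" from `J` to the unit ideal: factors are the monomial
primes `P (T j)`, with `|T j|` weakly decreasing and bounded by `k`. -/
def GF (J : Ideal (MvPolynomial (Fin n) K)) (k : ℕ) : Prop :=
  ∃ (r : ℕ) (c : Fin (r + 1) → Ideal (MvPolynomial (Fin n) K))
    (u : Fin r → (Fin n →₀ ℕ)) (T : Fin r → Finset (Fin n)),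
    IsPrimeFiltration J c u ∧ (∀ j, filtFactor c u j = P K (T j)) ∧
      (∀ i j : Fin r, i ≤ j → (T j).card ≤ (T i).card) ∧ (∀ j, (T j).card ≤ k)

theorem GF_top (k : ℕ) : GF (⊤ : Ideal (MvPolynomial (Fin n) K)) k := by
  refine ⟨0, fun _ => ⊤, Fin.elim0, Fin.elim0, ⟨rfl, rfl, fun j => j.elim0, fun j => j.elim0⟩,
    fun j => j.elim0, fun i => i.elim0, fun j => j.elim0⟩

theorem GF_mono {J : Ideal (MvPolynomial (Fin n) K)} {k k' : ℕ} (hk : k ≤ k')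
    (h : GF J k) : GF J k' := by
  obtain ⟨r, c, u, T, h1, h2, h3, h4⟩ := h
  exact ⟨r, c, u, T, h1, h2, h3, fun j => le_trans (h4 j) hk⟩

theorem GF_step {J J' : Ideal (MvPolynomial (Fin n) K)} {p : Fin n →₀ ℕ}
    {T : Finset (Fin n)} {k k' : ℕ}
    (hcolon : J.colon (Ideal.span {mono K p}) = P K T)
    (hsup : J ⊔ Ideal.span {mono K p} = J')
    (hk : T.card ≤ k) (hk' : k' ≤ T.card) (h : GF J' k') : GF J k := by
  obtain ⟨r, c, u, Tf, ⟨hc0, hlast, hstep, hprime⟩, hfac, hanti, hbd⟩ := h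
  have hsz : ∀ j : Fin r, (Tf j).card ≤ T.card := fun j => le_trans (hbd j) hk'
  refine ⟨r + 1, Fin.cons J c, Fin.cons p u, Fin.cons T Tf, ⟨rfl, ?_, ?_, ?_⟩, ?_, ?_, ?_⟩
  · rw [← Fin.succ_last, Fin.cons_succ]
    exact hlast
  · intro j
    rcases Fin.eq_zero_or_eq_succ j with rfl | ⟨i, rfl⟩
    · simp only [Fin.cons_succ, Fin.castSucc_zero, Fin.cons_zero]
      rw [hc0, hsup]
    · simp only [← Fin.succ_castSucc, Fin.cons_succ]
      exact hstep i
  · intro j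
    rcases Fin.eq_zero_or_eq_succ j with rfl | ⟨i, rfl⟩
    · simp only [Fin.castSucc_zero, Fin.cons_zero, hcolon]
      exact P_isPrime T
    · simp only [← Fin.succ_castSucc, Fin.cons_succ]
      exact hprime i
  · intro j
    rcases Fin.eq_zero_or_eq_succ j with rfl | ⟨i, rfl⟩
    · simp only [filtFactor, Fin.castSucc_zero, Fin.cons_zero, hcolon]
    · simp only [filtFactor, ← Fin.succ_castSucc, Fin.cons_succ]
      exact hfac i
  · intro i j hij
    rcases Fin.eq_zero_or_eq_succ i with rfl | ⟨i', rfl⟩ <;>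
      rcases Fin.eq_zero_or_eq_succ j with rfl | ⟨j', rfl⟩
    · exact le_rfl
    · rw [Fin.cons_zero, Fin.cons_succ]
      exact hsz j'
    · exact absurd (Fin.le_zero_iff.mp hij) (Fin.succ_ne_zero i')
    · rw [Fin.cons_succ, Fin.cons_succ]
      exact hanti i' j' (by rwa [Fin.succ_le_succ_iff] at hij)
  · intro j
    rcases Fin.eq_zero_or_eq_succ j with rfl | ⟨i, rfl⟩
    · rwa [Fin.cons_zero]
    · rw [Fin.cons_succ]
      exact le_trans (hsz i) hk

theorem GF_prettyClean {J : Ideal (MvPolynomial (Fin n) K)} {k : ℕ} (h : GF J k) :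
    IsPrettyClean J := by
  obtain ⟨r, c, u, T, h1, h2, h3, _⟩ := h
  refine ⟨r, c, u, h1, ?_⟩
  intro i j hij hle
  rw [h2 i, h2 j] at hle ⊢
  have hsub : T i ⊆ T j := P_le_P hle
  have hcard : (T j).card ≤ (T i).card := h3 i j (le_of_lt hij)
  rw [Finset.eq_of_subset_of_card_le hsub hcard]



theorem Up_upset (g : Fin n →₀ ℕ) : Up {q : Fin n →₀ ℕ | g ≤ q} :=
  fun _ _ hx hxy => le_trans hx hxy

theorem Up_union_upset {U : Set (Fin n →₀ ℕ)} (hU : Up U) (p : Fin n →₀ ℕ) :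
    Up (U ∪ {q | p ≤ q}) := by
  rintro x y (hx | hx) hxy
  · exact Or.inl (hU hx hxy)
  · exact Or.inr (le_trans hx hxy)

theorem le_finsupp_def {x y : Fin n →₀ ℕ} : x ≤ y ↔ ∀ i, x i ≤ y i :=
  Finsupp.le_def

/-- Block (a): the principal monomial ideal generated by `x^g`. -/
theorem GF_up : ∀ (N : ℕ) (g : Fin n →₀ ℕ), (g.sum fun _ k => k) ≤ N →
    GF (MI K {q | g ≤ q}) 1 := by
  intro N
  induction N with
  | zero =>
    intro g hg
    have hz : ∀ i, g i = 0 := by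
      intro i
      by_contra hne
      have hmem : i ∈ g.support := Finsupp.mem_support_iff.mpr hne
      have : g i ≤ g.sum fun _ k => k :=
        Finset.single_le_sum (f := fun i => g i) (fun _ _ => Nat.zero_le _) hmem
      omega
    have : (0 : Fin n →₀ ℕ) ∈ {q : Fin n →₀ ℕ | g ≤ q} := by
      rw [Set.mem_setOf_eq, le_finsupp_def]
      intro i; simp [hz i]
    rw [MI_eq_top this]
    exact GF_top 1
  | succ N ih =>
    intro g hg
    by_cases hg0 : ∀ i, g i = 0
    · have : (0 : Fin n →₀ ℕ) ∈ {q : Fin n →₀ ℕ | g ≤ q} := by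
        rw [Set.mem_setOf_eq, le_finsupp_def]
        intro i; simp [hg0 i]
      rw [MI_eq_top this]
      exact GF_top 1
    · push_neg at hg0
      obtain ⟨i, hi⟩ := hg0
      set h : Fin n →₀ ℕ := g - Finsupp.single i 1 with hh
      have hle : Finsupp.single i 1 ≤ g := by
        rw [le_finsupp_def]
        intro j
        rw [Finsupp.single_apply]
        by_cases hij : i = j
        · subst hij; simp; omega
        · rw [if_neg hij]; omega
      have happ : ∀ j, h j = g j - Finsupp.single i 1 j := fun j =>
        Finsupp.tsub_apply g (Finsupp.single i 1) j
      have hcolon : {w : Fin n →₀ ℕ | h + w ∈ {q : Fin n →₀ ℕ | g ≤ q}} = PU {i} := by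
        ext w
        rw [Set.mem_setOf_eq, Set.mem_setOf_eq, le_finsupp_def, PU]
        constructor
        · intro hw
          refine ⟨i, Finset.mem_singleton_self i, ?_⟩
          have := hw i
          rw [Finsupp.add_apply, happ i, Finsupp.single_apply, if_pos rfl] at this
          omega
        · rintro ⟨j, hj, hjw⟩
          rw [Finset.mem_singleton] at hj
          rw [hj] at hjw
          intro k
          rw [Finsupp.add_apply, happ k, Finsupp.single_apply]
          by_cases hik : i = k
          · subst hik; rw [if_pos rfl]; omega
          · rw [if_neg hik]; omega
      have hsup : {q : Fin n →₀ ℕ | g ≤ q} ∪ {q : Fin n →₀ ℕ | h ≤ q} =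
          {q : Fin n →₀ ℕ | h ≤ q} := by
        apply Set.union_eq_self_of_subset_left
        intro q hq
        exact (le_trans tsub_le_self (show g ≤ q from hq) : h ≤ q)
      have hdeg : (h.sum fun _ k => k) ≤ N := by
        have hgsum : (g.sum fun _ k => k) = (h.sum fun _ k => k) + 1 := by
          have : h + Finsupp.single i 1 = g := tsub_add_cancel_of_le hle
          calc (g.sum fun _ k => k) = ((h + Finsupp.single i 1).sum fun _ k => k) := by
                rw [this]
            _ = (h.sum fun _ k => k) + ((Finsupp.single i 1).sum fun _ k => k) :=
                Finsupp.sum_add_index' (fun _ => rfl) (fun _ _ _ => rfl)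
            _ = (h.sum fun _ k => k) + 1 := by
                rw [Finsupp.sum_single_index rfl]
        omega
      refine GF_step (p := h) (T := {i}) ?_ ?_ (by simp) (by simp) (ih h hdeg)
      · rw [colon_MI (Up_upset g) h, hcolon]
        rfl
      · rw [MI_sup, hsup]

theorem hit2 : ∀ (N : ℕ) (V : Set (Fin 2 →₀ ℕ)), Up V → SatF V →
    ∀ (q : Fin 2 →₀ ℕ) (k1 k2 : ℕ), k1 + k2 ≤ N →
      q + Finsupp.single 0 k1 ∈ V → q + Finsupp.single 1 k2 ∈ V → q ∈ V := by
  intro N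
  induction N with
  | zero =>
    intro V _ _ q k1 k2 hN h1 _
    obtain ⟨rfl, rfl⟩ : k1 = 0 ∧ k2 = 0 := by omega
    simpa using h1
  | succ N ih =>
    intro V hV hS q k1 k2 hN h1 h2
    match k1, k2 with
    | 0, _ => simpa using h1
    | _, 0 => simpa using h2
    | m1+1, m2+1 =>
      apply hS q
      intro i
      fin_cases i
      · show q + Finsupp.single 0 1 ∈ V
        refine ih V hV hS (q + Finsupp.single 0 1) m1 (m2+1) (by omega) ?_ ?_
        · rw [add_assoc, ← Finsupp.single_add, Nat.add_comm 1 m1]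
          exact h1
        · exact hV h2 (by
            rw [le_finsupp_def]
            intro j
            simp only [Finsupp.add_apply]
            omega)
      · show q + Finsupp.single 1 1 ∈ V
        refine ih V hV hS (q + Finsupp.single 1 1) (m1+1) m2 (by omega) ?_ ?_
        · exact hV h1 (by
            rw [le_finsupp_def]
            intro j
            simp only [Finsupp.add_apply]
            omega)
        · rw [add_assoc, ← Finsupp.single_add, Nat.add_comm 1 m2]
          exact h2

/-- The saturated phase: a saturated monomial ideal in at most three variables
has a good filtration with factors of size at most 2. -/
theorem lemB (hn : n ≤ 3) (J : Ideal (MvPolynomial (Fin n) K)) :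
    ∀ U : Set (Fin n →₀ ℕ), Up U → U.Nonempty → SatF U → MI K U = J →
      GF J (min 2 n) := by
  induction J using IsNoetherian.induction with
  | _ J ih =>
  intro U hU hne hS hMI
  classical
  subst hMI
  by_cases h0 : (0 : Fin n →₀ ℕ) ∈ U
  · rw [MI_eq_top h0]; exact GF_top _
  -- the componentwise minimum g of U
  have hex : ∀ i : Fin n, ∃ k, ∃ a ∈ U, a i = k := by
    intro i
    obtain ⟨a, ha⟩ := hne
    exact ⟨a i, a, ha, rfl⟩
  set g : Fin n →₀ ℕ := Finsupp.equivFunOnFinite.symm (fun i => Nat.find (hex i)) with hgdef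
  have hgapp : ∀ i, g i = Nat.find (hex i) := fun i => rfl
  have hgle : ∀ a ∈ U, g ≤ a := by
    intro a ha
    rw [le_finsupp_def]
    intro i
    rw [hgapp]
    exact Nat.find_min' (hex i) ⟨a, ha, rfl⟩
  set U' : Set (Fin n →₀ ℕ) := {w | g + w ∈ U} with hU'def
  have hU' : Up U' := by
    intro x y hx hxy
    exact hU hx (add_le_add_right hxy g)
  have hS' : SatF U' := by
    intro q hq
    apply hS (g + q)
    intro i
    rw [add_assoc]
    exact hq i
  have hgcd : ∀ i, ∃ w ∈ U', w i = 0 := by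
    intro i
    obtain ⟨a, ha, hai⟩ := Nat.find_spec (hex i)
    refine ⟨a - g, ?_, ?_⟩
    · show g + (a - g) ∈ U
      rwa [add_tsub_cancel_of_le (hgle a ha)]
    · rw [Finsupp.tsub_apply, hai, hgapp]
      omega
  by_cases hg : g ∈ U
  · -- U is the principal up-set of g
    have hUg : U = {q | g ≤ q} := by
      ext q
      exact ⟨fun hq => hgle q hq, fun hq => hU hg hq⟩
    have hn1 : 1 ≤ n := by
      rcases Nat.eq_zero_or_pos n with rfl | h
      · exfalso
        obtain ⟨a, ha⟩ := hne
        have : a = 0 := Finsupp.ext fun i => i.elim0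
        exact h0 (this ▸ ha)
      · exact h
    rw [hUg]
    exact GF_mono (by omega) (GF_up ((g.sum fun _ k => k)) g le_rfl)
  · have h0' : (0 : Fin n →₀ ℕ) ∉ U' := by
      intro hc
      apply hg
      have h2 : g + 0 ∈ U := hc
      rwa [add_zero] at h2
    -- now split on the number of variables
    interval_cases n
    · -- n = 0 : impossible
      exfalso
      obtain ⟨a, ha⟩ := hne
      have : a = 0 := Finsupp.ext fun i => i.elim0
      exact h0 (this ▸ ha)
    · -- n = 1 : impossible
      exfalso
      obtain ⟨w, hw, hw0⟩ := hgcd 0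
      have : w = 0 := Finsupp.ext fun i => by fin_cases i; exact hw0
      exact h0' (this ▸ hw)
    · -- n = 2 : impossible
      exfalso
      obtain ⟨w0, hw0, hw00⟩ := hgcd 0
      obtain ⟨w1, hw1, hw11⟩ := hgcd 1
      apply h0'
      refine hit2 (w1 0 + w0 1) U' hU' hS' 0 (w1 0) (w0 1) le_rfl ?_ ?_
      · have : (0 : Fin 2 →₀ ℕ) + Finsupp.single 0 (w1 0) = w1 := by
          rw [zero_add]
          ext i
          fin_cases i
          · simp
          · rw [Finsupp.single_apply, if_neg (by decide)]
            exact hw11.symm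
        rw [this]; exact hw1
      · have : (0 : Fin 2 →₀ ℕ) + Finsupp.single 1 (w0 1) = w0 := by
          rw [zero_add]
          ext i
          fin_cases i
          · rw [Finsupp.single_apply, if_neg (by decide)]
            exact hw00.symm
          · simp
        rw [this]; exact hw0
    · -- n = 3 : the main middle step
      obtain ⟨p', T, hcard, hcol, hsat'⟩ :=
        stepOut hU' hS' (hgcd 0) (hgcd 1) (hgcd 2) h0'
      set p : Fin 3 →₀ ℕ := g + p' with hpdef
      have hp'U' : p' ∉ U' := by
        intro hc
        have := (hcol 0).mp (by rwa [add_zero])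
        obtain ⟨i, _, hi⟩ := this
        exact hi rfl
      have hpU : p ∉ U := hp'U'
      have hshift : {w : Fin 3 →₀ ℕ | p + w ∈ U} = PU T := by
        ext w
        rw [Set.mem_setOf_eq, hpdef, add_assoc]
        exact hcol w
      have hJlt : MI K U < MI K (U ∪ {q | p ≤ q}) := by
        constructor
        · exact Ideal.span_mono (Set.image_mono Set.subset_union_left)
        · intro hle
          have hmem : mono K p ∈ MI K (U ∪ {q | p ≤ q}) :=
            (mono_mem (Up_union_upset hU p)).mpr (Or.inr (by simp : p ∈ {q | p ≤ q}))
          exact hpU ((mono_mem hU).mp (hle hmem))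
      have hSnew : SatF (U ∪ {q | p ≤ q}) := by
        intro q hq
        have hge : g ≤ q := by
          rw [le_finsupp_def]
          intro j
          have hij : ∃ i : Fin 3, i ≠ j := by
            fin_cases j
            · exact ⟨1, by decide⟩
            · exact ⟨0, by decide⟩
            · exact ⟨0, by decide⟩
          obtain ⟨i, hij⟩ := hij
          have h1 : g ≤ q + Finsupp.single i 1 := by
            rcases hq i with h | h
            · exact hgle _ h
            · exact le_trans (le_trans (by rw [hpdef]; exact le_self_add) h) le_rfl
          have := le_finsupp_def.mp h1 j
          rw [Finsupp.add_apply, Finsupp.single_apply, if_neg hij] at this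
          omega
        have hmemiff : ∀ w : Fin 3 →₀ ℕ,
            (g + w ∈ U ∪ {x | p ≤ x}) ↔ w ∈ U' ∪ {x | p' ≤ x} := by
          intro w
          rw [Set.mem_union, Set.mem_union]
          apply or_congr Iff.rfl
          rw [Set.mem_setOf_eq, Set.mem_setOf_eq, hpdef]
          exact ⟨fun h => le_of_add_le_add_left h, fun h => add_le_add_right h g⟩
        have hq'' := hsat' (q - g) (by
          intro i
          have h1 := hq i
          have : g + (q - g + Finsupp.single i 1) = q + Finsupp.single i 1 := by
            rw [← add_assoc, add_tsub_cancel_of_le hge]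
          exact (hmemiff _).mp (by rwa [this]))
        have := (hmemiff (q - g)).mpr hq''
        rwa [add_tsub_cancel_of_le hge] at this
      refine GF_step (p := p) (T := T) ?_ (MI_sup U p) (by omega) (by omega)
        (ih _ hJlt _ (Up_union_upset hU p) (hne.mono Set.subset_union_left) hSnew rfl)
      · rw [colon_MI hU p, hshift]
        rfl

/-- The socle phase: any nonempty monomial up-set gives a good filtration. -/
theorem lemA (hn : n ≤ 3) (J : Ideal (MvPolynomial (Fin n) K)) :
    ∀ U : Set (Fin n →₀ ℕ), Up U → U.Nonempty → MI K U = J → GF J n := by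
  induction J using IsNoetherian.induction with
  | _ J ih =>
  intro U hU hne hMI
  classical
  subst hMI
  by_cases h0 : (0 : Fin n →₀ ℕ) ∈ U
  · rw [MI_eq_top h0]; exact GF_top _
  by_cases hsoc : ∃ p : Fin n →₀ ℕ, p ∉ U ∧ ∀ i, p + Finsupp.single i 1 ∈ U
  · obtain ⟨p, hpU, hp⟩ := hsoc
    have hcolon : {w : Fin n →₀ ℕ | p + w ∈ U} = PU Finset.univ := by
      ext w
      rw [Set.mem_setOf_eq, PU]
      constructor
      · intro hw
        by_contra hc
        simp only [Set.mem_setOf_eq, Finset.mem_univ, true_and, not_exists, not_not] at hc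
        have : w = 0 := Finsupp.ext fun i => hc i
        rw [this, add_zero] at hw
        exact hpU hw
      · rintro ⟨i, _, hi⟩
        apply hU (hp i)
        rw [le_finsupp_def]
        intro j
        rw [Finsupp.add_apply, Finsupp.add_apply, Finsupp.single_apply]
        by_cases hij : i = j
        · subst hij; rw [if_pos rfl]; omega
        · rw [if_neg hij]; omega
    have hJlt : MI K U < MI K (U ∪ {q | p ≤ q}) := by
      constructor
      · exact Ideal.span_mono (Set.image_mono Set.subset_union_left)
      · intro hle
        have hmem : mono K p ∈ MI K (U ∪ {q | p ≤ q}) :=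
          (mono_mem (Up_union_upset hU p)).mpr (Or.inr (by simp : p ∈ {q | p ≤ q}))
        exact hpU ((mono_mem hU).mp (hle hmem))
    refine GF_step (p := p) (T := Finset.univ) ?_ (MI_sup U p) (by simp) (by simp)
      (ih _ hJlt _ (Up_union_upset hU p) (hne.mono Set.subset_union_left) rfl)
    · rw [colon_MI hU p, hcolon]
      rfl
  · push_neg at hsoc
    have hS : SatF U := by
      intro q hq
      by_contra hqU
      obtain ⟨i, hi⟩ := hsoc q hqU
      exact hi (hq i)
    exact GF_mono (min_le_right 2 n) (lemB hn _ U hU hne hS rfl)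

end PC

/-- Every monomial ideal in a polynomial ring in at most three
variables over a field is pretty clean. -/
theorem prettyClean_of_le_three_variables
    {K : Type*} [Field K] {n : ℕ} (hn : n ≤ 3)
    (I : Ideal (MvPolynomial (Fin n) K)) (hI : IsMonomialIdeal I) :
    IsPrettyClean I := by
  classical
  obtain ⟨A, rfl⟩ := hI
  by_cases hA : A = ∅
  · -- the zero ideal
    subst hA
    rw [Set.image_empty, Ideal.span_empty]
    have hmono0 : mono K (0 : Fin n →₀ ℕ) = 1 := by simp [mono]
    have hcol : (⊥ : Ideal (MvPolynomial (Fin n) K)).colon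
        (Ideal.span {mono K (0 : Fin n →₀ ℕ)}) = ⊥ := by
      ext f
      rw [Ideal.mem_colon_span_singleton, hmono0, mul_one]
    refine ⟨1, fun j => if j = 0 then ⊥ else ⊤, fun _ => 0, ⟨?_, ?_, ?_, ?_⟩, ?_⟩
    · show (if (0 : Fin 2) = 0 then (⊥ : Ideal (MvPolynomial (Fin n) K)) else ⊤) = ⊥
      rw [if_pos rfl]
    · show (if (Fin.last 1) = 0 then (⊥ : Ideal (MvPolynomial (Fin n) K)) else ⊤) = ⊤
      rw [if_neg (by decide)]
    · intro j
      have hj : j = 0 := Subsingleton.elim j 0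
      subst hj
      show (if (Fin.succ (0:Fin 1)) = 0 then (⊥ : Ideal (MvPolynomial (Fin n) K)) else ⊤)
        = (if (Fin.castSucc (0:Fin 1)) = 0 then (⊥ : Ideal (MvPolynomial (Fin n) K)) else ⊤)
          ⊔ Ideal.span {mono K 0}
      rw [if_neg (by decide), if_pos (by decide), hmono0, Ideal.span_singleton_one, sup_top_eq]
    · intro j
      have hj : j = 0 := Subsingleton.elim j 0
      subst hj
      show (Submodule.colon
        (if (Fin.castSucc (0:Fin 1)) = 0 then (⊥ : Ideal (MvPolynomial (Fin n) K)) else ⊤)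
        (Ideal.span {mono K (0 : Fin n →₀ ℕ)} : Set (MvPolynomial (Fin n) K))).IsPrime
      rw [if_pos (by decide), hcol]
      exact Ideal.bot_prime
    · intro i j hij
      rw [Subsingleton.elim i j] at hij
      exact absurd hij (lt_irrefl _)
  · -- a nonempty monomial ideal
    set U : Set (Fin n →₀ ℕ) := {q | ∃ a ∈ A, a ≤ q} with hUdef
    have hne : U.Nonempty := by
      obtain ⟨a, ha⟩ := Set.nonempty_iff_ne_empty.mpr hA
      exact ⟨a, a, ha, le_rfl⟩
    have hU : PC.Up U := by
      rintro x y ⟨a, ha, hax⟩ hxy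
      exact ⟨a, ha, le_trans hax hxy⟩
    have hMI : PC.MI K U = Ideal.span ((fun a => mono K a) '' A) := by
      apply le_antisymm
      · rw [PC.MI, Ideal.span_le]
        rintro _ ⟨q, ⟨a, ha, haq⟩, rfl⟩
        obtain ⟨w, rfl⟩ := le_iff_exists_add.mp haq
        show mono K (a + w) ∈ _
        rw [← PC.mono_mul]
        exact Ideal.mul_mem_right _ _ (Ideal.subset_span ⟨a, ha, rfl⟩)
      · exact Ideal.span_mono (Set.image_mono fun a ha => ⟨a, ha, le_rfl⟩)
    exact PC.GF_prettyClean (PC.lemA hn _ U hU hne hMI)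
end

section
/- Let n ≥ 4 and let I = (x_1,x_2) ∩ (x_3,…,x_n) be the squarefree monomial ideal in S = K[x_1,…,x_n]. Then I is not pretty clean; in particular, for n = 4 the ideal (x_1x_3, x_1x_4, x_2x_3, x_2x_4) ⊂ K[x_1,x_2,x_3,x_4] is not pretty clean, and hence not clean. -/
open MvPolynomial

namespace NPC5

open MvPolynomial Finsupp

/-- The set of exponents of the generators `x_i x_k`, `i < 2 ≤ k`, of our ideal. -/
def Gset (n : ℕ) : Set (Fin n →₀ ℕ) :=
  {s | ∃ i k : Fin n, (i : ℕ) < 2 ∧ 2 ≤ (k : ℕ) ∧ s = Finsupp.single i 1 + Finsupp.single k 1}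

/-- Monomial-level membership in the `j`-th ideal of the filtration. -/
def MemP {n r : ℕ} (u : Fin r → (Fin n →₀ ℕ)) (jv : ℕ) (a : Fin n →₀ ℕ) : Prop :=
  ∃ s, (s ∈ Gset n ∨ ∃ i : Fin r, (i : ℕ) < jv ∧ s = u i) ∧ s ≤ a

variable {K : Type*} [Field K] {n : ℕ}

lemma mono_mul (a b : Fin n →₀ ℕ) : mono K a * mono K b = mono K (a + b) := by
  simp [mono, monomial_mul]

lemma X_eq_mono (i : Fin n) : (X i : MvPolynomial (Fin n) K) = mono K (Finsupp.single i 1) := rfl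

lemma mem_span_monoImage {S : Set (Fin n →₀ ℕ)} {p : MvPolynomial (Fin n) K} :
    p ∈ Ideal.span ((fun a => mono K a) '' S) ↔ ∀ m ∈ p.support, ∃ s ∈ S, s ≤ m :=
  mem_ideal_span_monomial_image

lemma mono_mem_span {S : Set (Fin n →₀ ℕ)} {a : Fin n →₀ ℕ} :
    mono K a ∈ Ideal.span ((fun s => mono K s) '' S) ↔ ∃ s ∈ S, s ≤ a := by
  rw [mem_span_monoImage]
  have hs : (mono K a).support = {a} := by
    classical
    rw [show (mono K a) = monomial a (1:K) from rfl, support_monomial, if_neg one_ne_zero]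
  rw [hs]
  simp

lemma pair_le {i k : Fin n} {a : Fin n →₀ ℕ} (hik : i ≠ k) :
    Finsupp.single i 1 + Finsupp.single k 1 ≤ a ↔ 1 ≤ a i ∧ 1 ≤ a k := by
  have hik' : k ≠ i := Ne.symm hik
  constructor
  · intro h
    constructor
    · have := Finsupp.le_def.1 h i
      simpa [Finsupp.single_apply, hik'] using this
    · have := Finsupp.le_def.1 h k
      simpa [Finsupp.single_apply, hik] using this
  · rintro ⟨h1, h2⟩
    rw [Finsupp.le_def]
    intro x
    rw [Finsupp.add_apply, Finsupp.single_apply, Finsupp.single_apply]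
    by_cases e1 : i = x
    · by_cases e2 : k = x
      · exact absurd (e1.trans e2.symm) hik
      · rw [if_pos e1, if_neg e2, ← e1]; omega
    · by_cases e2 : k = x
      · rw [if_neg e1, if_pos e2, ← e2]; omega
      · rw [if_neg e1, if_neg e2]; omega

lemma MemP_mono_a {r : ℕ} {u : Fin r → (Fin n →₀ ℕ)} {jv : ℕ} {a b : Fin n →₀ ℕ}
    (h : MemP u jv a) (hab : a ≤ b) : MemP u jv b := by
  obtain ⟨s, hs, hle⟩ := h; exact ⟨s, hs, hle.trans hab⟩

lemma MemP_mono_j {r : ℕ} {u : Fin r → (Fin n →₀ ℕ)} {jv jv' : ℕ} {a : Fin n →₀ ℕ}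
    (h : jv ≤ jv') (hm : MemP u jv a) : MemP u jv' a := by
  obtain ⟨s, hs, hle⟩ := hm
  refine ⟨s, ?_, hle⟩
  rcases hs with h1 | ⟨i, hi, rfl⟩
  · exact Or.inl h1
  · exact Or.inr ⟨i, by omega, rfl⟩

end NPC5

namespace NPC5

open MvPolynomial Finsupp

variable {n r : ℕ}

/-- `a` "enters the filtration" exactly at step `j`. -/
def Blk (u : Fin r → (Fin n →₀ ℕ)) (j : Fin r) (a : Fin n →₀ ℕ) : Prop :=
  ¬ MemP u j a ∧ u j ≤ a

lemma blk_memP_succ {u : Fin r → (Fin n →₀ ℕ)} {j : Fin r} {a : Fin n →₀ ℕ}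
    (hb : Blk u j a) : MemP u ((j : ℕ) + 1) a :=
  ⟨u j, Or.inr ⟨j, by omega, rfl⟩, hb.2⟩

lemma blk_unique {u : Fin r → (Fin n →₀ ℕ)} {j j' : Fin r} {a : Fin n →₀ ℕ}
    (hb : Blk u j a) (hb' : Blk u j' a) : j = j' := by
  by_contra hne
  have hv : (j : ℕ) ≠ (j' : ℕ) := fun h => hne (Fin.ext h)
  rcases Nat.lt_or_ge (j : ℕ) (j' : ℕ) with h | h
  · exact hb'.1 (MemP_mono_j (by omega) (blk_memP_succ hb))
  · exact hb.1 (MemP_mono_j (by omega) (blk_memP_succ hb'))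

lemma blk_u_inj {u : Fin r → (Fin n →₀ ℕ)} (hnotU : ∀ j : Fin r, ¬ MemP u j (u j))
    {j j' : Fin r} (h : u j = u j') : j = j' := by
  refine blk_unique (a := u j) ⟨hnotU j, le_rfl⟩ ⟨?_, le_of_eq h.symm⟩
  rw [h]; exact hnotU j'

lemma blk_exists {u : Fin r → (Fin n →₀ ℕ)} (hTop : ∀ a, MemP u r a)
    {a : Fin n →₀ ℕ} (h0 : ¬ MemP u 0 a) : ∃ j : Fin r, Blk u j a := by
  have key : ∀ m, MemP u m a → ∃ j : Fin r, Blk u j a := by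
    intro m
    induction m with
    | zero => intro hm; exact absurd hm h0
    | succ m ih =>
      rintro ⟨s, hs, hsle⟩
      rcases hs with hsG | ⟨i, hiv, rfl⟩
      · exact absurd ⟨s, Or.inl hsG, hsle⟩ h0
      · by_cases hi : MemP u i a
        · exact ih (MemP_mono_j (by omega) hi)
        · exact ⟨i, hi, hsle⟩
  exact key r (hTop a)

lemma le_single_cases {i : Fin n} {v : Fin n →₀ ℕ} (h : v ≤ Finsupp.single i 1) :
    v = 0 ∨ v = Finsupp.single i 1 := by
  by_cases hv : v i = 0
  · left
    ext x
    have hx := Finsupp.le_def.1 h x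
    rw [Finsupp.single_apply] at hx
    rw [Finsupp.zero_apply]
    by_cases e : i = x
    · rw [← e]; exact hv
    · rw [if_neg e] at hx; omega
  · right
    ext x
    have hx := Finsupp.le_def.1 h x
    rw [Finsupp.single_apply] at hx ⊢
    by_cases e : i = x
    · rw [if_pos e] at hx ⊢; rw [← e] at hx ⊢; omega
    · rw [if_neg e] at hx ⊢; omega

lemma single_notI {u : Fin r → (Fin n →₀ ℕ)} (i : Fin n) :
    ¬ MemP u 0 (Finsupp.single i 1) := by
  rintro ⟨s, hs, hsle⟩
  rcases hs with ⟨i', k', hi', hk', rfl⟩ | ⟨i', hi', _⟩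
  · have hne : i' ≠ k' := fun h => by
      have := congrArg Fin.val h; omega
    obtain ⟨h1, h2⟩ := (pair_le hne).1 hsle
    rw [Finsupp.single_apply] at h1 h2
    have e1 : i = i' := by by_contra e; rw [if_neg e] at h1; omega
    have e2 : i = k' := by by_contra e; rw [if_neg e] at h2; omega
    have v1 := congrArg Fin.val e1
    have v2 := congrArg Fin.val e2
    omega
  · omega

lemma zero_notI {u : Fin r → (Fin n →₀ ℕ)} : ¬ MemP u 0 (0 : Fin n →₀ ℕ) := by
  rintro ⟨s, hs, hsle⟩
  rcases hs with ⟨i', k', hi', hk', rfl⟩ | ⟨i', hi', _⟩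
  · have hne : i' ≠ k' := fun h => by
      have := congrArg Fin.val h; omega
    obtain ⟨h1, h2⟩ := (pair_le hne).1 hsle
    rw [Finsupp.zero_apply] at h1
    omega
  · omega

theorem combinat (hn : 4 ≤ n) (u : Fin r → (Fin n →₀ ℕ)) (A : Fin r → Set (Fin n))
    (hE : ∀ (j : Fin r) (w : Fin n →₀ ℕ), MemP u j (w + u j) ↔ ∃ i ∈ A j, w i ≠ 0)
    (hnotU : ∀ j : Fin r, ¬ MemP u j (u j))
    (hTop : ∀ a : Fin n →₀ ℕ, MemP u r a)
    (hPC : ∀ i j : Fin r, i < j → A i ⊆ A j → A i = A j) : False := by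
  classical
  -- characterization of membership in `A j`
  have hAiff : ∀ (j : Fin r) (i : Fin n), i ∈ A j ↔ MemP u j (Finsupp.single i 1 + u j) := by
    intro j i
    constructor
    · intro hi
      exact (hE j _).2 ⟨i, hi, by simp⟩
    · intro h
      obtain ⟨x, hxA, hxne⟩ := (hE j _).1 h
      rw [Finsupp.single_apply] at hxne
      by_cases e : i = x
      · rw [e]; exact hxA
      · rw [if_neg e] at hxne; exact absurd rfl hxne
  have hBlkChar : ∀ (j : Fin r) (a : Fin n →₀ ℕ), Blk u j a → ∀ i ∈ A j, a i = u j i := by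
    intro j a hb i hi
    by_contra hne
    apply hb.1
    have heq : a = (a - u j) + u j := (tsub_add_cancel_of_le hb.2).symm
    rw [heq]
    refine (hE j _).2 ⟨i, hi, ?_⟩
    rw [Finsupp.tsub_apply]
    have := Finsupp.le_def.1 hb.2 i
    omega
  have hmemBlk : ∀ (j : Fin r) (w : Fin n →₀ ℕ), (∀ i ∈ A j, w i = 0) → Blk u j (w + u j) := by
    intro j w hw
    refine ⟨fun h => ?_, le_add_self⟩
    obtain ⟨i, hi, hne⟩ := (hE j w).1 h
    exact hne (hw i hi)
  have hBlkNotI : ∀ (j : Fin r) (a : Fin n →₀ ℕ), Blk u j a → ¬ MemP u 0 a :=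
    fun j a hb h => hb.1 (MemP_mono_j (Nat.zero_le _) h)
  have hGF : ∀ (j : Fin r) (i k : Fin n), (i : ℕ) < 2 → 2 ≤ (k : ℕ) → i ∈ A j ∨ k ∈ A j := by
    intro j i k hi hk
    have h0 : MemP u 0 ((Finsupp.single i 1 + Finsupp.single k 1) + u j) :=
      ⟨_, Or.inl ⟨i, k, hi, hk, rfl⟩, le_self_add⟩
    obtain ⟨x, hxA, hxne⟩ := (hE j _).1 (MemP_mono_j (Nat.zero_le _) h0)
    rw [Finsupp.add_apply, Finsupp.single_apply, Finsupp.single_apply] at hxne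
    by_cases e1 : i = x
    · exact Or.inl (by rw [e1]; exact hxA)
    · by_cases e2 : k = x
      · exact Or.inr (by rw [e2]; exact hxA)
      · rw [if_neg e1, if_neg e2] at hxne; omega
  -- MAIN: every prime factor is (x_0,x_1) or (x_2,…,x_{n-1})
  have hMAIN : ∀ j : Fin r, (∀ i ∈ A j, (i : ℕ) < 2) ∨ (∀ i ∈ A j, 2 ≤ (i : ℕ)) := by
    intro jb
    by_contra hcon
    push_neg at hcon
    obtain ⟨⟨q0, hq0A, hq0⟩, ⟨p0, hp0A, hp0⟩⟩ := hcon
    set AA := A jb with hAAdef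
    -- minimal index whose factor is contained in `AA`
    obtain ⟨i0, hi0sub, hi0min⟩ : ∃ i0 : Fin r, A i0 ⊆ AA ∧
        ∀ i : Fin r, (i : ℕ) < (i0 : ℕ) → ¬ A i ⊆ AA := by
      by_contra hno
      push_neg at hno
      have key : ∀ m : ℕ, ∀ i : Fin r, (i : ℕ) ≤ m → ¬ A i ⊆ AA := by
        intro m
        induction m using Nat.strong_induction_on with
        | _ m ih =>
          intro i him hsub
          obtain ⟨i', hi', hsub'⟩ := hno i hsub
          exact ih i' (by omega) i' le_rfl hsub'
      exact key jb jb le_rfl subset_rfl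
    have hminU : ∀ i : Fin r, (i : ℕ) < (i0 : ℕ) → ∃ k, k ∈ A i ∧ k ∉ AA := by
      intro i hi
      by_contra h
      push_neg at h
      exact hi0min i hi h
    have hA0 : A i0 = AA := by
      have hle : (i0 : ℕ) ≤ (jb : ℕ) := by
        by_contra h
        exact hi0min jb (by omega) subset_rfl
      rcases Nat.lt_or_ge (i0 : ℕ) (jb : ℕ) with h | h
      · exact hPC i0 jb (Fin.lt_def.mpr h) hi0sub
      · have : i0 = jb := Fin.ext (by omega)
        rw [this]
    -- the localized chain: kill all variables outside AA
    set N : ℕ → (Fin n →₀ ℕ) → Prop :=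
      fun m b => ∃ a : Fin n →₀ ℕ, (∀ k ∈ AA, a k = b k) ∧ MemP u m a with hNdef
    -- all steps before i0 are redundant after localization
    have hR : ∀ m, m ≤ (i0 : ℕ) → ∀ b, N m b → N 0 b := by
      intro m
      induction m using Nat.strong_induction_on with
      | _ m ih =>
        intro hm b hb
        obtain ⟨a, haA, s, hs, hsle⟩ := hb
        rcases hs with hsG | ⟨i, hiv, rfl⟩
        · exact ⟨a, haA, s, Or.inl hsG, hsle⟩
        · obtain ⟨ki, hkiA, hkiN⟩ := hminU i (by omega)
          have heq : a + Finsupp.single ki 1 = ((a - u i) + Finsupp.single ki 1) + u i := by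
            ext x
            simp only [Finsupp.add_apply, Finsupp.tsub_apply]
            have := Finsupp.le_def.1 hsle x
            omega
          have hmem : MemP u i (a + Finsupp.single ki 1) := by
            rw [heq]
            refine (hE i _).2 ⟨ki, hkiA, ?_⟩
            rw [Finsupp.add_apply, Finsupp.single_eq_same]
            exact Nat.succ_ne_zero _
          have hNi : N i b := by
            refine ⟨a + Finsupp.single ki 1, ?_, hmem⟩
            intro k hk
            have hkik : ki ≠ k := fun h => hkiN (by rw [h]; exact hk)
            rw [Finsupp.add_apply, Finsupp.single_apply, if_neg hkik, add_zero]
            exact haA k hk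
          exact ih i (by omega) (by omega) b hNi
    have hnotN : ¬ N i0 (u i0) := by
      rintro ⟨a, haA, hma⟩
      have h2 : MemP u i0 (a + (u i0 - a)) := MemP_mono_a hma le_self_add
      have heq : a + (u i0 - a) = (a - u i0) + u i0 := by
        ext x
        simp only [Finsupp.add_apply, Finsupp.tsub_apply]
        omega
      rw [heq] at h2
      obtain ⟨k, hkA, hkne⟩ := (hE i0 _).1 h2
      rw [hA0] at hkA
      apply hkne
      rw [Finsupp.tsub_apply, haA k hkA]
      omega
    have hN0notU : ¬ N 0 (u i0) :=
      fun ⟨a, h1, h2⟩ => hnotN ⟨a, h1, MemP_mono_j (Nat.zero_le _) h2⟩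
    have hNk : ∀ k ∈ AA, N 0 (Finsupp.single k 1 + u i0) := by
      intro k hk
      rw [← hA0] at hk
      have hmm := (hAiff i0 k).1 hk
      exact hR i0 le_rfl _ ⟨_, fun _ _ => rfl, hmm⟩
    -- extracting a generator under a standard monomial of the localized ideal
    have hext : ∀ b, N 0 b → ∃ (a : Fin n →₀ ℕ) (i' k' : Fin n),
        (∀ k ∈ AA, a k = b k) ∧ (i' : ℕ) < 2 ∧ 2 ≤ (k' : ℕ) ∧ 1 ≤ a i' ∧ 1 ≤ a k' := by
      rintro b ⟨a, haA, s, hs, hsle⟩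
      rcases hs with ⟨i', k', hi', hk', rfl⟩ | ⟨i, hi, _⟩
      · have hne : i' ≠ k' := fun h => by have := congrArg Fin.val h; omega
        obtain ⟨h1, h2⟩ := (pair_le hne).1 hsle
        exact ⟨a, i', k', haA, hi', hk', h1, h2⟩
      · omega
    by_cases hPv : ∀ i : Fin n, (i : ℕ) < 2 → i ∈ AA
    · -- (x_0,x_1) ⊆ AA ; use q0 ∈ AA with 2 ≤ q0
      obtain ⟨a, i', k', haA, hi', hk', hai', hak'⟩ := hext _ (hNk q0 hq0A)
      have h5 := haA i' (hPv i' hi')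
      have hq0i' : q0 ≠ i' := fun h => by have := congrArg Fin.val h; omega
      rw [Finsupp.add_apply, Finsupp.single_apply, if_neg hq0i', zero_add] at h5
      have hui' : 1 ≤ u i0 i' := by omega
      by_cases hQv : ∀ l : Fin n, 2 ≤ (l : ℕ) → l ∈ AA
      · -- AA = everything
        have h02 : (0 : ℕ) < n := by omega
        set p1 : Fin n := ⟨0, h02⟩ with hp1
        have hp1v : (p1 : ℕ) = 0 := rfl
        obtain ⟨a2, i2, k2, ha2A, hi2, hk2, hai2, hak2⟩ :=
          hext _ (hNk p1 (hPv p1 (by omega)))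
        have h6 := ha2A k2 (hQv k2 hk2)
        have hp1k2 : p1 ≠ k2 := fun h => by have := congrArg Fin.val h; omega
        rw [Finsupp.add_apply, Finsupp.single_apply, if_neg hp1k2, zero_add] at h6
        have huk2 : 1 ≤ u i0 k2 := by omega
        have hne3 : i' ≠ k2 := fun h => by have := congrArg Fin.val h; omega
        exact hN0notU ⟨u i0, fun _ _ => rfl,
          Finsupp.single i' 1 + Finsupp.single k2 1, Or.inl ⟨i', k2, hi', hk2, rfl⟩,
          (pair_le hne3).2 ⟨hui', huk2⟩⟩
      · push_neg at hQv
        obtain ⟨l, hl2, hlA⟩ := hQv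
        have hne4 : i' ≠ l := fun h => by have := congrArg Fin.val h; omega
        apply hN0notU
        refine ⟨u i0 + Finsupp.single l 1, ?_,
          Finsupp.single i' 1 + Finsupp.single l 1, Or.inl ⟨i', l, hi', hl2, rfl⟩, ?_⟩
        · intro k hk
          rw [Finsupp.add_apply, Finsupp.single_apply, if_neg (fun h => hlA (by rw [h]; exact hk)),
            add_zero]
        · rw [pair_le hne4]
          constructor
          · rw [Finsupp.add_apply, Finsupp.single_apply, if_neg (fun h => hne4 (by rw [h]))]
            omega
          · rw [Finsupp.add_apply, Finsupp.single_apply, if_pos rfl]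
            omega
    · push_neg at hPv
      obtain ⟨l, hl, hlA⟩ := hPv
      have hQv : ∀ k : Fin n, 2 ≤ (k : ℕ) → k ∈ AA := by
        intro k hk
        rcases hGF jb l k hl hk with h | h
        · exact absurd h hlA
        · exact h
      obtain ⟨a, i', k', haA, hi', hk', hai', hak'⟩ := hext _ (hNk p0 hp0A)
      have h5 := haA k' (hQv k' hk')
      have hp0k' : p0 ≠ k' := fun h => by have := congrArg Fin.val h; omega
      rw [Finsupp.add_apply, Finsupp.single_apply, if_neg hp0k', zero_add] at h5
      have huk' : 1 ≤ u i0 k' := by omega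
      have hne5 : l ≠ k' := fun h => by have := congrArg Fin.val h; omega
      apply hN0notU
      refine ⟨u i0 + Finsupp.single l 1, ?_,
        Finsupp.single l 1 + Finsupp.single k' 1, Or.inl ⟨l, k', hl, hk', rfl⟩, ?_⟩
      · intro k hk
        rw [Finsupp.add_apply, Finsupp.single_apply, if_neg (fun h => hlA (by rw [h]; exact hk)),
          add_zero]
      · rw [pair_le hne5]
        constructor
        · rw [Finsupp.add_apply, Finsupp.single_apply, if_pos rfl]
          omega
        · rw [Finsupp.add_apply, Finsupp.single_apply, if_neg (fun h => hne5 (by rw [h]))]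
          omega
  -- FINAL contradiction
  have h0n : (0 : ℕ) < n := by omega
  have h1n : (1 : ℕ) < n := by omega
  have h2n : (2 : ℕ) < n := by omega
  have h3n : (3 : ℕ) < n := by omega
  set v0 : Fin n := ⟨0, h0n⟩ with hv0d
  set v1 : Fin n := ⟨1, h1n⟩ with hv1d
  set v2 : Fin n := ⟨2, h2n⟩ with hv2d
  set v3 : Fin n := ⟨3, h3n⟩ with hv3d
  have hv0 : (v0 : ℕ) = 0 := rfl
  have hv1 : (v1 : ℕ) = 1 := rfl
  have hv2 : (v2 : ℕ) = 2 := rfl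
  have hv3 : (v3 : ℕ) = 3 := rfl
  obtain ⟨j0, hbj0⟩ := blk_exists hTop zero_notI
  have hu0 : u j0 = 0 := le_antisymm hbj0.2 (zero_le)
  -- a helper producing, for a variable `i` whose block is not `j0`,
  -- the block with generator `single i 1`
  have hvarblk : ∀ i : Fin n, ∃ j : Fin r, Blk u j (Finsupp.single i 1) ∧
      (u j = 0 ∨ u j = Finsupp.single i 1) := by
    intro i
    obtain ⟨j, hb⟩ := blk_exists hTop (single_notI i)
    exact ⟨j, hb, le_single_cases hb.2⟩
  rcases hMAIN j0 with hP | hQ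
  · -- case A j0 ⊆ {0,1} : then in fact {0,1} ⊆ A j0
    have hPsub : ∀ i : Fin n, (i : ℕ) < 2 → i ∈ A j0 := by
      intro i hi
      rcases hGF j0 i v2 hi (by omega) with h | h
      · exact h
      · have := hP v2 h; omega
    -- block of x_0
    obtain ⟨jA, hbA, hcA⟩ := hvarblk v0
    have huA : u jA = Finsupp.single v0 1 := by
      rcases hcA with h | h
      · exfalso
        have hj : jA = j0 := blk_u_inj hnotU (by rw [h, hu0])
        rw [hj] at hbA
        have hc := hBlkChar j0 _ hbA v0 (hPsub v0 (by omega))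
        rw [hu0] at hc
        simp [Finsupp.single_apply] at hc
      · exact h
    have hAjA : ∀ i ∈ A jA, 2 ≤ (i : ℕ) := by
      rcases hMAIN jA with h | h
      · exfalso
        have hblk := hmemBlk jA (Finsupp.single v2 1) (fun i hi => by
          rw [Finsupp.single_apply, if_neg (fun he => by have h1 := h i hi; have h2 := congrArg Fin.val he; omega)])
        apply hBlkNotI jA _ hblk
        rw [huA]
        exact ⟨_, Or.inl ⟨v0, v2, by omega, by omega, rfl⟩, le_of_eq (add_comm _ _)⟩
      · exact h
    -- block of x_1
    obtain ⟨jB, hbB, hcB⟩ := hvarblk v1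
    have huB : u jB = Finsupp.single v1 1 := by
      rcases hcB with h | h
      · exfalso
        have hj : jB = j0 := blk_u_inj hnotU (by rw [h, hu0])
        rw [hj] at hbB
        have hc := hBlkChar j0 _ hbB v1 (hPsub v1 (by omega))
        rw [hu0] at hc
        simp [Finsupp.single_apply] at hc
      · exact h
    have hAjB : ∀ i ∈ A jB, 2 ≤ (i : ℕ) := by
      rcases hMAIN jB with h | h
      · exfalso
        have hblk := hmemBlk jB (Finsupp.single v2 1) (fun i hi => by
          rw [Finsupp.single_apply, if_neg (fun he => by have h1 := h i hi; have h2 := congrArg Fin.val he; omega)])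
        apply hBlkNotI jB _ hblk
        rw [huB]
        exact ⟨_, Or.inl ⟨v1, v2, by omega, by omega, rfl⟩, le_of_eq (add_comm _ _)⟩
      · exact h
    have hneAB : jA ≠ jB := by
      intro h
      rw [h] at huA
      have hc := huA.symm.trans huB
      have := DFunLike.congr_fun hc v0
      rw [Finsupp.single_apply, Finsupp.single_apply, if_pos rfl,
        if_neg (fun he : v1 = v0 => by have := congrArg Fin.val he; omega)] at this
      exact one_ne_zero this
    apply hneAB
    have hblkA : Blk u jA (Finsupp.single v0 1 + Finsupp.single v1 1) := by
      have := hmemBlk jA (Finsupp.single v1 1) (fun i hi => by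
        rw [Finsupp.single_apply, if_neg (fun he => by have h1 := hAjA i hi; have h2 := congrArg Fin.val he; omega)])
      rw [huA, add_comm] at this
      exact this
    have hblkB : Blk u jB (Finsupp.single v0 1 + Finsupp.single v1 1) := by
      have := hmemBlk jB (Finsupp.single v0 1) (fun i hi => by
        rw [Finsupp.single_apply, if_neg (fun he => by have h1 := hAjB i hi; have h2 := congrArg Fin.val he; omega)])
      rw [huB] at this
      exact this
    exact blk_unique hblkA hblkB
  · -- case A j0 ⊆ {2,…} : then {2,…} ⊆ A j0
    have hQsub : ∀ k : Fin n, 2 ≤ (k : ℕ) → k ∈ A j0 := by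
      intro k hk
      rcases hGF j0 v0 k (by omega) hk with h | h
      · have := hQ v0 h; omega
      · exact h
    obtain ⟨jA, hbA, hcA⟩ := hvarblk v2
    have huA : u jA = Finsupp.single v2 1 := by
      rcases hcA with h | h
      · exfalso
        have hj : jA = j0 := blk_u_inj hnotU (by rw [h, hu0])
        rw [hj] at hbA
        have hc := hBlkChar j0 _ hbA v2 (hQsub v2 (by omega))
        rw [hu0] at hc
        simp [Finsupp.single_apply] at hc
      · exact h
    have hAjA : ∀ i ∈ A jA, (i : ℕ) < 2 := by
      rcases hMAIN jA with h | h
      · exact h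
      · exfalso
        have hblk := hmemBlk jA (Finsupp.single v0 1) (fun i hi => by
          rw [Finsupp.single_apply, if_neg (fun he => by have h1 := h i hi; have h2 := congrArg Fin.val he; omega)])
        apply hBlkNotI jA _ hblk
        rw [huA]
        exact ⟨_, Or.inl ⟨v0, v2, by omega, by omega, rfl⟩, le_rfl⟩
    obtain ⟨jB, hbB, hcB⟩ := hvarblk v3
    have huB : u jB = Finsupp.single v3 1 := by
      rcases hcB with h | h
      · exfalso
        have hj : jB = j0 := blk_u_inj hnotU (by rw [h, hu0])
        rw [hj] at hbB
        have hc := hBlkChar j0 _ hbB v3 (hQsub v3 (by omega))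
        rw [hu0] at hc
        simp [Finsupp.single_apply] at hc
      · exact h
    have hAjB : ∀ i ∈ A jB, (i : ℕ) < 2 := by
      rcases hMAIN jB with h | h
      · exact h
      · exfalso
        have hblk := hmemBlk jB (Finsupp.single v0 1) (fun i hi => by
          rw [Finsupp.single_apply, if_neg (fun he => by have h1 := h i hi; have h2 := congrArg Fin.val he; omega)])
        apply hBlkNotI jB _ hblk
        rw [huB]
        exact ⟨_, Or.inl ⟨v0, v3, by omega, by omega, rfl⟩, le_rfl⟩
    have hneAB : jA ≠ jB := by
      intro h
      rw [h] at huA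
      have hc := huA.symm.trans huB
      have := DFunLike.congr_fun hc v2
      rw [Finsupp.single_apply, Finsupp.single_apply, if_pos rfl,
        if_neg (fun he : v3 = v2 => by have := congrArg Fin.val he; omega)] at this
      exact one_ne_zero this
    apply hneAB
    have hblkA : Blk u jA (Finsupp.single v2 1 + Finsupp.single v3 1) := by
      have := hmemBlk jA (Finsupp.single v3 1) (fun i hi => by
        rw [Finsupp.single_apply, if_neg (fun he => by have h1 := hAjA i hi; have h2 := congrArg Fin.val he; omega)])
      rw [huA, add_comm] at this
      exact this
    have hblkB : Blk u jB (Finsupp.single v2 1 + Finsupp.single v3 1) := by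
      have := hmemBlk jB (Finsupp.single v2 1) (fun i hi => by
        rw [Finsupp.single_apply, if_neg (fun he => by have h1 := hAjB i hi; have h2 := congrArg Fin.val he; omega)])
      rw [huB] at this
      exact this
    exact blk_unique hblkA hblkB

end NPC5

namespace NPC5

open MvPolynomial Finsupp

variable {K : Type*} [Field K] {n : ℕ}

theorem not_prettyClean_G (hn : 4 ≤ n) :
    ¬ IsPrettyClean (Ideal.span ((fun a => mono K a) '' Gset n)) := by
  rintro ⟨r, c, u, ⟨⟨h0, hlast, hstep, hprime⟩, hpc⟩⟩
  -- explicit monomial description of the chain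
  have hSY : ∀ j : Fin (r + 1), c j = Ideal.span ((fun a => mono K a) ''
      {s | s ∈ Gset n ∨ ∃ i : Fin r, (i : ℕ) < (j : ℕ) ∧ s = u i}) := by
    intro j
    induction j using Fin.induction with
    | zero =>
      rw [h0]
      have hset : {s | s ∈ Gset n ∨ ∃ i : Fin r, (i : ℕ) < ((0 : Fin (r+1)) : ℕ) ∧ s = u i}
          = Gset n := by
        ext s
        constructor
        · rintro (h | ⟨i, hi, _⟩)
          · exact h
          · rw [Fin.val_zero] at hi; omega
        · exact fun h => Or.inl h
      rw [hset]
    | succ j ih =>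
      rw [hstep j, ih]
      rw [show ({mono K (u j)} : Set (MvPolynomial (Fin n) K)) = (fun a => mono K a) '' {u j} by
        rw [Set.image_singleton]]
      rw [← Ideal.span_union, ← Set.image_union]
      have hset : ({s | s ∈ Gset n ∨ ∃ i : Fin r, (i : ℕ) < ((j.castSucc : Fin (r+1)) : ℕ) ∧ s = u i}
            ∪ {u j} : Set (Fin n →₀ ℕ))
          = {s | s ∈ Gset n ∨ ∃ i : Fin r, (i : ℕ) < ((j.succ : Fin (r+1)) : ℕ) ∧ s = u i} := by
        ext s
        simp only [Set.mem_union, Set.mem_setOf_eq, Set.mem_singleton_iff, Fin.coe_castSucc,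
          Fin.val_succ]
        constructor
        · rintro ((h | ⟨i, hi, rfl⟩) | rfl)
          · exact Or.inl h
          · exact Or.inr ⟨i, by omega, rfl⟩
          · exact Or.inr ⟨j, by omega, rfl⟩
        · rintro (h | ⟨i, hi, rfl⟩)
          · exact Or.inl (Or.inl h)
          · by_cases hij : (i : ℕ) < (j : ℕ)
            · exact Or.inl (Or.inr ⟨i, hij, rfl⟩)
            · have : i = j := Fin.ext (by omega)
              rw [this]; exact Or.inr rfl
      rw [hset]
  have hMem : ∀ (j : Fin (r + 1)) (a : Fin n →₀ ℕ), mono K a ∈ c j ↔ MemP u (j : ℕ) a := by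
    intro j a
    rw [hSY j, mono_mem_span]
    exact Iff.rfl
  set A : Fin r → Set (Fin n) := fun j => {i | X i ∈ filtFactor c u j} with hA
  have hcolon : ∀ (j : Fin r) (f : MvPolynomial (Fin n) K),
      f ∈ filtFactor c u j ↔ f * mono K (u j) ∈ c j.castSucc :=
    fun j f => Ideal.mem_colon_span_singleton
  have hcast : ∀ j : Fin r, ((j.castSucc : Fin (r+1)) : ℕ) = (j : ℕ) := fun j => rfl
  have hAiffP : ∀ (j : Fin r) (i : Fin n),
      i ∈ A j ↔ MemP u (j : ℕ) (Finsupp.single i 1 + u j) := by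
    intro j i
    rw [hA]
    simp only [Set.mem_setOf_eq]
    rw [hcolon, X_eq_mono, mono_mul, hMem, hcast]
  have hnotU : ∀ j : Fin r, ¬ MemP u (j : ℕ) (u j) := by
    intro j h
    have h1 : (1 : MvPolynomial (Fin n) K) ∈ filtFactor c u j := by
      rw [hcolon, one_mul, hMem, hcast]; exact h
    exact (hprime j).ne_top ((Ideal.eq_top_iff_one _).2 h1)
  have hE : ∀ (j : Fin r) (w : Fin n →₀ ℕ),
      MemP u (j : ℕ) (w + u j) ↔ ∃ i ∈ A j, w i ≠ 0 := by
    intro j w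
    constructor
    · intro h
      have hw : mono K w ∈ filtFactor c u j := by
        rw [hcolon, mono_mul, hMem, hcast]; exact h
      have hrep : mono K w = ∏ i ∈ w.support, (X i : MvPolynomial (Fin n) K) ^ w i := by
        rw [mono, monomial_eq, C_1, one_mul]
        rfl
      rw [hrep] at hw
      haveI : (filtFactor c u j).IsPrime := hprime j
      obtain ⟨i, his, hXp⟩ := Ideal.IsPrime.prod_mem_iff.1 hw
      have hXi : X i ∈ filtFactor c u j := (hprime j).mem_of_pow_mem _ hXp
      exact ⟨i, hXi, Finsupp.mem_support_iff.1 his⟩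
    · rintro ⟨i, hiA, hwi⟩
      refine MemP_mono_a ((hAiffP j i).1 hiA) ?_
      apply add_le_add_left
      rw [Finsupp.single_le_iff]
      omega
  have hTop : ∀ a : Fin n →₀ ℕ, MemP u r a := by
    intro a
    have h1 : mono K a ∈ c (Fin.last r) := by rw [hlast]; exact Submodule.mem_top
    rw [hMem] at h1
    simpa using h1
  have hfacEq : ∀ j : Fin r, filtFactor c u j = Ideal.span (X '' A j) := by
    intro j
    refine le_antisymm ?_ ?_
    · intro f hf
      rw [mem_ideal_span_X_image]
      intro m hm
      have h1 : f * mono K (u j) ∈ c j.castSucc := (hcolon j f).1 hf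
      rw [hSY] at h1
      have h2 := mem_span_monoImage.1 h1
      have hsupp : (m + u j) ∈ (f * mono K (u j)).support := by
        rw [MvPolynomial.mem_support_iff, mono, coeff_mul_monomial, mul_one]
        exact MvPolynomial.mem_support_iff.1 hm
      have h4 : MemP u ((j.castSucc : Fin (r+1)) : ℕ) (m + u j) := h2 _ hsupp
      rw [hcast] at h4
      exact (hE j m).1 h4
    · rw [Ideal.span_le]
      rintro f ⟨i, hi, rfl⟩
      exact hi
  have hPC : ∀ i j : Fin r, i < j → A i ⊆ A j → A i = A j := by
    intro i j hij hsub
    have hle : filtFactor c u i ≤ filtFactor c u j := by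
      rw [hfacEq, hfacEq]
      exact Ideal.span_mono (Set.image_mono hsub)
    have heq := hpc i j hij hle
    rw [hA]
    ext x
    simp only [Set.mem_setOf_eq, heq]
  exact combinat hn u A hE hnotU hTop hPC

end NPC5

namespace NPC5

open MvPolynomial Finsupp

variable {K : Type*} [Field K] {n : ℕ}

theorem inf_eq (i0 i1 : Fin n) (h0 : (i0 : ℕ) = 0) (h1 : (i1 : ℕ) = 1) :
    Ideal.span {(X i0 : MvPolynomial (Fin n) K), X i1} ⊓
      Ideal.span ((fun i => (X i : MvPolynomial (Fin n) K)) '' {i : Fin n | 2 ≤ (i : ℕ)}) =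
    Ideal.span ((fun a => mono K a) '' Gset n) := by
  have himg : ({(X i0 : MvPolynomial (Fin n) K), X i1} : Set (MvPolynomial (Fin n) K))
      = X '' {i0, i1} := by
    rw [Set.image_insert_eq, Set.image_singleton]
  ext p
  rw [Submodule.mem_inf, himg,
    show ((fun i => (X i : MvPolynomial (Fin n) K)) '' {i : Fin n | 2 ≤ (i : ℕ)})
      = X '' {i : Fin n | 2 ≤ (i : ℕ)} from rfl,
    mem_ideal_span_X_image, mem_ideal_span_X_image, mem_span_monoImage]
  constructor
  · rintro ⟨hp, hq⟩ m hm
    obtain ⟨i, him, hine⟩ := hp m hm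
    obtain ⟨k, hk2, hkne⟩ := hq m hm
    simp only [Set.mem_insert_iff, Set.mem_singleton_iff] at him
    have hk2' : 2 ≤ (k : ℕ) := hk2
    have hi2 : (i : ℕ) < 2 := by rcases him with rfl | rfl <;> omega
    have hik : i ≠ k := fun h => by have := congrArg Fin.val h; omega
    refine ⟨Finsupp.single i 1 + Finsupp.single k 1, ⟨i, k, hi2, hk2', rfl⟩, ?_⟩
    rw [pair_le hik]
    omega
  · intro hp
    constructor
    · intro m hm
      obtain ⟨s, ⟨i, k, hi2, hk2, rfl⟩, hsle⟩ := hp m hm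
      have hik : i ≠ k := fun h => by have := congrArg Fin.val h; omega
      have hle := (pair_le hik).1 hsle
      refine ⟨i, ?_, by omega⟩
      simp only [Set.mem_insert_iff, Set.mem_singleton_iff]
      have : (i : ℕ) = 0 ∨ (i : ℕ) = 1 := by omega
      rcases this with h | h
      · exact Or.inl (Fin.ext (by omega))
      · exact Or.inr (Fin.ext (by omega))
    · intro m hm
      obtain ⟨s, ⟨i, k, hi2, hk2, rfl⟩, hsle⟩ := hp m hm
      have hik : i ≠ k := fun h => by have := congrArg Fin.val h; omega
      have hle := (pair_le hik).1 hsle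
      exact ⟨k, hk2, by omega⟩

theorem gens4 :
    ({(X 0 * X 2 : MvPolynomial (Fin 4) K), X 0 * X 3, X 1 * X 2, X 1 * X 3} :
        Set (MvPolynomial (Fin 4) K)) = (fun a => mono K a) '' Gset 4 := by
  have e02 : (X 0 * X 2 : MvPolynomial (Fin 4) K)
      = mono K (Finsupp.single 0 1 + Finsupp.single 2 1) := by
    rw [X_eq_mono, X_eq_mono, mono_mul]
  have e03 : (X 0 * X 3 : MvPolynomial (Fin 4) K)
      = mono K (Finsupp.single 0 1 + Finsupp.single 3 1) := by
    rw [X_eq_mono, X_eq_mono, mono_mul]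
  have e12 : (X 1 * X 2 : MvPolynomial (Fin 4) K)
      = mono K (Finsupp.single 1 1 + Finsupp.single 2 1) := by
    rw [X_eq_mono, X_eq_mono, mono_mul]
  have e13 : (X 1 * X 3 : MvPolynomial (Fin 4) K)
      = mono K (Finsupp.single 1 1 + Finsupp.single 3 1) := by
    rw [X_eq_mono, X_eq_mono, mono_mul]
  ext f
  simp only [Set.mem_insert_iff, Set.mem_singleton_iff, Set.mem_image]
  constructor
  · rintro (rfl | rfl | rfl | rfl)
    · exact ⟨_, ⟨0, 2, by decide, by decide, rfl⟩, e02.symm⟩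
    · exact ⟨_, ⟨0, 3, by decide, by decide, rfl⟩, e03.symm⟩
    · exact ⟨_, ⟨1, 2, by decide, by decide, rfl⟩, e12.symm⟩
    · exact ⟨_, ⟨1, 3, by decide, by decide, rfl⟩, e13.symm⟩
  · rintro ⟨s, ⟨i, k, hi, hk, rfl⟩, rfl⟩
    have hi' : i = (0 : Fin 4) ∨ i = 1 := by
      have h4 := i.isLt
      have : (i : ℕ) = 0 ∨ (i : ℕ) = 1 := by omega
      rcases this with h | h
      · exact Or.inl (Fin.ext (by rw [h]; rfl))
      · exact Or.inr (Fin.ext (by rw [h]; rfl))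
    have hk' : k = (2 : Fin 4) ∨ k = 3 := by
      have h4 := k.isLt
      have : (k : ℕ) = 2 ∨ (k : ℕ) = 3 := by omega
      rcases this with h | h
      · exact Or.inl (Fin.ext (by rw [h]; rfl))
      · exact Or.inr (Fin.ext (by rw [h]; rfl))
    rcases hi' with rfl | rfl <;> rcases hk' with rfl | rfl
    · exact Or.inl e02.symm
    · exact Or.inr (Or.inl e03.symm)
    · exact Or.inr (Or.inr (Or.inl e12.symm))
    · exact Or.inr (Or.inr (Or.inr e13.symm))

theorem isClean_isPrettyClean {σ : Type*} {I : Ideal (MvPolynomial σ K)}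
    (h : IsClean I) : IsPrettyClean I := by
  obtain ⟨r, c, u, hfilt, hsupp⟩ := h
  refine ⟨r, c, u, hfilt, ?_⟩
  intro i j hij hle
  have hi : filtFactor c u i ∈ I.minimalPrimes := by rw [← hsupp]; exact ⟨i, rfl⟩
  have hj : filtFactor c u j ∈ I.minimalPrimes := by rw [← hsupp]; exact ⟨j, rfl⟩
  exact le_antisymm hle (hj.2 hi.1 hle)

end NPC5

/-- For `n ≥ 4` the squarefree monomial ideal
`I = (x_1,x_2) ∩ (x_3,…,x_n)` in `K[x_1,…,x_n]` is not pretty clean; in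
particular for `n = 4` the ideal `(x_1x_3, x_1x_4, x_2x_3, x_2x_4)` is not
pretty clean, hence not clean. -/
theorem not_prettyClean_intersection
    {K : Type*} [Field K] (n : ℕ) (hn : 4 ≤ n) :
    (¬ IsPrettyClean
        (Ideal.span {(X (⟨0, by omega⟩ : Fin n) : MvPolynomial (Fin n) K),
            X ⟨1, by omega⟩} ⊓
          Ideal.span ((fun i => (X i : MvPolynomial (Fin n) K)) ''
            {i : Fin n | 2 ≤ (i : ℕ)}))) ∧
    (¬ IsPrettyClean
        (Ideal.span {(X 0 * X 2 : MvPolynomial (Fin 4) K), X 0 * X 3,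
          X 1 * X 2, X 1 * X 3})) ∧
    (¬ IsClean
        (Ideal.span {(X 0 * X 2 : MvPolynomial (Fin 4) K), X 0 * X 3,
          X 1 * X 2, X 1 * X 3})) := by
  have h4 : ¬ IsPrettyClean
      (Ideal.span {(X 0 * X 2 : MvPolynomial (Fin 4) K), X 0 * X 3, X 1 * X 2, X 1 * X 3}) := by
    rw [NPC5.gens4]
    exact NPC5.not_prettyClean_G (by omega)
  refine ⟨?_, h4, fun hcl => h4 (NPC5.isClean_isPrettyClean hcl)⟩
  rw [NPC5.inf_eq (⟨0, by omega⟩ : Fin n) ⟨1, by omega⟩ rfl rfl]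
  exact NPC5.not_prettyClean_G hn
end

section
/- Let I be a monomial ideal in S = K[x_1,…,x_n] and let T = uK[Z] be a Stanley space occurring in some Stanley decomposition of S/I (u a monomial, Z ⊆ {x_1,…,x_n}). Then the K-vector subspace I_1 = I ⊕ T of S is an ideal of S if and only if I_1 = (I, u); and in this case I : u = P, where P = (x_i : x_i ∉ Z). -/
open MvPolynomial

/-- The family of residue classes of the monomials `x^{u i}·x^v`, `supp v ⊆ Z i`,
of a candidate Stanley decomposition `S/I = ⊕ᵢ x^{u i} K[Z i]`. -/
noncomputable def stanleyFamily {K : Type*} [Field K] {n : ℕ}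
    (I : Ideal (MvPolynomial (Fin n) K)) {r : ℕ}
    (u : Fin r → (Fin n →₀ ℕ)) (Z : Fin r → Finset (Fin n)) :
    (Σ i : Fin r, {v : Fin n →₀ ℕ // v.support ⊆ Z i}) →
      (MvPolynomial (Fin n) K ⧸ I) :=
  fun p => Ideal.Quotient.mk I (mono K (u p.1 + p.2.1))

/-- `S/I = ⊕ᵢ x^{u i} K[Z i]` is a Stanley decomposition: the residue classes of
the monomials `x^{u i}·x^v` (`supp v ⊆ Z i`) form a `K`-basis of `S/I`. -/
def IsStanleyDecomposition {K : Type*} [Field K] {n : ℕ}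
    (I : Ideal (MvPolynomial (Fin n) K)) {r : ℕ}
    (u : Fin r → (Fin n →₀ ℕ)) (Z : Fin r → Finset (Fin n)) : Prop :=
  LinearIndependent K (stanleyFamily I u Z) ∧
    Submodule.span K (Set.range (stanleyFamily I u Z)) = ⊤

/-- The Stanley space `x^a·K[Z]` viewed as a `K`-subspace of `S`: the `K`-span
of the monomials `x^a·x^v` with `supp v ⊆ Z`. -/
noncomputable def stanleySubspace (K : Type*) [Field K] {n : ℕ}
    (a : Fin n →₀ ℕ) (Z : Finset (Fin n)) :
    Submodule K (MvPolynomial (Fin n) K) :=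
  Submodule.span K ((fun v => mono K (a + v)) '' {v : Fin n →₀ ℕ | v.support ⊆ Z})

/-- Let `T = x^a·K[Z]` be a Stanley space occurring in some
Stanley decomposition of `S/I`. The `K`-subspace `I ⊕ T` of `S` is an ideal of
`S` if and only if it equals `(I, x^a)`; and in this case
`I : x^a = (x_i : x_i ∉ Z)`. -/
theorem stanley_space_sup_isIdeal_iff
    {K : Type*} [Field K] {n : ℕ} (I : Ideal (MvPolynomial (Fin n) K))
    (hI : IsMonomialIdeal I) (a : Fin n →₀ ℕ) (Z : Finset (Fin n))
    (hT : ∃ (r : ℕ) (u : Fin r → (Fin n →₀ ℕ)) (Z' : Fin r → Finset (Fin n))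
      (i : Fin r), IsStanleyDecomposition I u Z' ∧ u i = a ∧ Z' i = Z) :
    ((∃ J : Ideal (MvPolynomial (Fin n) K),
        Submodule.restrictScalars K I ⊔ stanleySubspace K a Z =
          Submodule.restrictScalars K J) ↔
      Submodule.restrictScalars K I ⊔ stanleySubspace K a Z =
        Submodule.restrictScalars K (I ⊔ Ideal.span {mono K a})) ∧
    ((∃ J : Ideal (MvPolynomial (Fin n) K),
        Submodule.restrictScalars K I ⊔ stanleySubspace K a Z =
          Submodule.restrictScalars K J) →
      I.colon (Ideal.span {mono K a}) =
        Ideal.span ((fun i => (X i : MvPolynomial (Fin n) K)) ''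
          {i : Fin n | i ∉ Z})) := by
  classical
  obtain ⟨A, hA⟩ := hI
  obtain ⟨r, u, Z', i₀, ⟨hli, -⟩, hui, hZi⟩ := hT
  have hmul : ∀ v w : Fin n →₀ ℕ, mono K v * mono K w = mono K (v + w) := by
    intro v w; simp [mono, monomial_mul]
  have hmemI : ∀ x : MvPolynomial (Fin n) K,
      x ∈ I ↔ ∀ xi ∈ x.support, ∃ si ∈ A, si ≤ xi := by
    intro x
    rw [hA]
    exact mem_ideal_span_monomial_image
  have hxa_mem_T : mono K a ∈ stanleySubspace K a Z :=
    Submodule.subset_span ⟨0, by simp, by simp⟩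
  have key : (∃ J : Ideal (MvPolynomial (Fin n) K),
        Submodule.restrictScalars K I ⊔ stanleySubspace K a Z =
          Submodule.restrictScalars K J) →
      Submodule.restrictScalars K I ⊔ stanleySubspace K a Z =
        Submodule.restrictScalars K (I ⊔ Ideal.span {mono K a}) := by
    rintro ⟨J, hJ⟩
    apply le_antisymm
    · apply sup_le
      · intro x hx
        exact Ideal.mem_sup_left hx
      · rw [stanleySubspace, Submodule.span_le]
        rintro _ ⟨v, -, rfl⟩
        exact Ideal.mem_sup_right (Ideal.mem_span_singleton.2 ⟨mono K v, (hmul a v).symm⟩)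
    · have hle : I ⊔ Ideal.span {mono K a} ≤ J := by
        apply sup_le
        · intro x hx
          have hx' : x ∈ Submodule.restrictScalars K I ⊔ stanleySubspace K a Z :=
            Submodule.mem_sup_left hx
          rw [hJ] at hx'
          exact hx'
        · rw [Ideal.span_singleton_le_iff_mem]
          have hx' : mono K a ∈ Submodule.restrictScalars K I ⊔ stanleySubspace K a Z :=
            Submodule.mem_sup_right hxa_mem_T
          rw [hJ] at hx'
          exact hx'
      rw [hJ]
      intro x hx
      exact hle hx
  refine ⟨⟨key, fun h => ⟨I ⊔ Ideal.span {mono K a}, h⟩⟩, ?_⟩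
  intro hJ
  have heq := key hJ
  apply le_antisymm
  · intro f hf
    rw [Ideal.mem_colon_span_singleton] at hf
    rw [mem_ideal_span_X_image]
    intro b hb
    by_contra hcon
    push_neg at hcon
    have hbZ : b.support ⊆ Z := by
      intro i hi
      by_contra hiZ
      exact Finsupp.mem_support_iff.1 hi (hcon i hiZ)
    have hmem : mono K (u i₀ + b) ∈ I := by
      have hsupp : b + a ∈ (f * mono K a).support := by
        rw [MvPolynomial.mem_support_iff, mono, coeff_mul_monomial, mul_one]
        exact MvPolynomial.mem_support_iff.1 hb
      obtain ⟨si, hsi, hle⟩ := (hmemI _).1 hf _ hsupp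
      rw [hmemI]
      intro xi hxi
      rw [mono, support_monomial, if_neg one_ne_zero, Finset.mem_singleton] at hxi
      subst hxi
      exact ⟨si, hsi, by rwa [hui, add_comm a b]⟩
    have hz : stanleyFamily I u Z' ⟨i₀, ⟨b, by rwa [hZi]⟩⟩ = 0 :=
      (Ideal.Quotient.eq_zero_iff_mem).2 hmem
    exact hli.ne_zero _ hz
  · rw [Ideal.span_le]
    rintro _ ⟨i, hi, rfl⟩
    rw [SetLike.mem_coe, Ideal.mem_colon_span_singleton]
    have hXm : (X i : MvPolynomial (Fin n) K) * mono K a = mono K (a + Finsupp.single i 1) := by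
      rw [show (X i : MvPolynomial (Fin n) K) = mono K (Finsupp.single i 1) from rfl, hmul,
        add_comm]
    rw [hXm]
    -- x^(a+e_i) lies in I ⊕ T = (I, x^a); split it and look at the coefficient
    have hmemSup : mono K (a + Finsupp.single i 1) ∈
        Submodule.restrictScalars K I ⊔ stanleySubspace K a Z := by
      rw [heq]
      exact Ideal.mem_sup_right
        (Ideal.mem_span_singleton.2 ⟨mono K (Finsupp.single i 1), (hmul a _).symm⟩)
    obtain ⟨f, hf, t, ht, hft⟩ := Submodule.mem_sup.1 hmemSup
    have hker : stanleySubspace K a Z ≤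
        LinearMap.ker (lcoeff K (a + Finsupp.single i 1) :
          MvPolynomial (Fin n) K →ₗ[K] K) := by
      rw [stanleySubspace, Submodule.span_le]
      rintro _ ⟨v, hv, rfl⟩
      simp only [SetLike.mem_coe, LinearMap.mem_ker, lcoeff_apply, mono, coeff_monomial]
      rw [if_neg]
      intro hEq
      have hv' : v = Finsupp.single i 1 := add_left_cancel hEq
      subst hv'
      have : i ∈ Z := hv (by simp [Finsupp.support_single_ne_zero i one_ne_zero])
      exact hi this
    have hct : MvPolynomial.coeff (a + Finsupp.single i 1) t = 0 := hker ht
    have hcf : MvPolynomial.coeff (a + Finsupp.single i 1) f = 1 := by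
      have := congrArg (MvPolynomial.coeff (a + Finsupp.single i 1)) hft
      rw [MvPolynomial.coeff_add, hct, add_zero, mono, coeff_monomial, if_pos rfl] at this
      exact this
    have hsupp : a + Finsupp.single i 1 ∈ f.support := by
      rw [MvPolynomial.mem_support_iff, hcf]
      exact one_ne_zero
    obtain ⟨si, hsi, hle⟩ := (hmemI f).1 hf _ hsupp
    rw [hmemI]
    intro xi hxi
    rw [mono, support_monomial, if_neg one_ne_zero, Finset.mem_singleton] at hxi
    subst hxi
    exact ⟨si, hsi, hle⟩
end
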